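/- arXiv:0901.2451 — 8 statements merged into one kernel-verified Lean document; each statement's English description precedes it below -/
import Mathlib

section
/- Let ℐ be a finite index set, y* ∈ ℝ^ℐ nonzero with y* ≥ 0, α ∈ ℝ^ℐ with α_i > 0 for all i, and let ζ^α_i = (y*_i/α_i)/(Σ_{i'} (y*_{i'})²/α_{i'}). Let V ⊆ ℝ^ℐ be a compact convex set containing 0 such that max_{v∈V} Σ_i y*_i v_i = 0, and suppose there is δ > 0 such that every v with Σ_i y*_i v_i = 0 and Euclidean norm ‖v‖ ≤ δ lies in V. Let z ∈ ℝ^ℐ with z ≥ 0, set w = Σ_i y*_i z_i, z* = ζ^α w, and f = Σ_i α_i (z_i − z*_i)². If z ≠ z*, then for every v ∈ V attaining max_{v'∈V} Σ_i α_i z_i v'_i, one has Σ_i α_i (z_i − z*_i)(−v_i) ≤ −δ f/‖z − z*‖ ≤ −δ √(min_i α_i) √f. -/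
/-- The lifting vector `ζ^α` determined by `α` and the dual optimum `y`. -/
noncomputable def zeta {I : Type*} [Fintype I] (α y : I → ℝ) : I → ℝ :=
  fun i => (y i / α i) / ∑ i', (y i') ^ 2 / α i'

open Finset in
/-- The key Lyapunov drift estimate (6.15)-(6.18) in the proof of Theorem 6. -/
theorem lyapunov_drift_bound {I : Type*} [Fintype I] [Nonempty I]
    (ystar α : I → ℝ) (hy0 : ystar ≠ 0) (hynn : ∀ i, 0 ≤ ystar i)
    (hα : ∀ i, 0 < α i)
    (V : Set (I → ℝ)) (hVcomp : IsCompact V) (hVconv : Convex ℝ V)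
    (h0V : (0 : I → ℝ) ∈ V)
    (hVmax : IsGreatest ((fun v => ∑ i, ystar i * v i) '' V) 0)
    (δ : ℝ) (hδ : 0 < δ)
    (hball : ∀ v : I → ℝ, (∑ i, ystar i * v i = 0) →
      Real.sqrt (∑ i, v i ^ 2) ≤ δ → v ∈ V)
    (z : I → ℝ) (hz : ∀ i, 0 ≤ z i)
    (hzne : z ≠ fun i => zeta α ystar i * ∑ i', ystar i' * z i')
    (v : I → ℝ) (hv : v ∈ V)
    (hvmax : ∀ v' ∈ V, ∑ i, α i * z i * v' i ≤ ∑ i, α i * z i * v i) :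
    (∑ i, α i * (z i - zeta α ystar i * ∑ i', ystar i' * z i') * (-(v i)) ≤
      -δ * (∑ i, α i * (z i - zeta α ystar i * ∑ i', ystar i' * z i') ^ 2) /
        Real.sqrt (∑ i, (z i - zeta α ystar i * ∑ i', ystar i' * z i') ^ 2)) ∧
    (-δ * (∑ i, α i * (z i - zeta α ystar i * ∑ i', ystar i' * z i') ^ 2) /
        Real.sqrt (∑ i, (z i - zeta α ystar i * ∑ i', ystar i' * z i') ^ 2) ≤
      -δ * Real.sqrt (univ.inf' univ_nonempty α) *
        Real.sqrt (∑ i, α i * (z i - zeta α ystar i * ∑ i', ystar i' * z i') ^ 2)) := by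
  classical
  set S := ∑ i', (ystar i') ^ 2 / α i' with hSdef
  have hS0 : 0 < S := by
    obtain ⟨i0, hi0⟩ := Function.ne_iff.mp hy0
    have hy0i : 0 < ystar i0 := (hynn i0).lt_of_ne (Ne.symm hi0)
    refine Finset.sum_pos' (fun i _ => div_nonneg (sq_nonneg _) (hα i).le) ⟨i0, mem_univ _, ?_⟩
    exact div_pos (pow_pos hy0i 2) (hα i0)
  set w := ∑ i', ystar i' * z i' with hwdef
  have hw0 : 0 ≤ w := Finset.sum_nonneg fun i _ => mul_nonneg (hynn i) (hz i)
  set d : I → ℝ := fun i => z i - zeta α ystar i * w with hddef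
  -- basic identities
  have hαzs : ∀ i, α i * (zeta α ystar i * w) = ystar i * w / S := by
    intro i
    have hαi := (hα i).ne'
    have hS := hS0.ne'
    simp only [zeta, ← hSdef]
    field_simp
  have hyzs : ∑ i, ystar i * (zeta α ystar i * w) = w := by
    have : ∀ i ∈ Finset.univ, ystar i * (zeta α ystar i * w)
        = (ystar i ^ 2 / α i) * (w / S) := by
      intro i _
      have hαi := (hα i).ne'
      simp only [zeta, ← hSdef]
      field_simp
    rw [Finset.sum_congr rfl this, ← Finset.sum_mul, ← hSdef]
    field_simp
  have hyd : ∑ i, ystar i * d i = 0 := by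
    have : ∑ i, ystar i * d i
        = (∑ i, ystar i * z i) - ∑ i, ystar i * (zeta α ystar i * w) := by
      rw [← Finset.sum_sub_distrib]
      exact Finset.sum_congr rfl fun i _ => by simp [hddef]; ring
    rw [this, hyzs, ← hwdef]
    ring
  -- nondegeneracy
  have hdne : ∃ i, d i ≠ 0 := by
    by_contra h
    push_neg at h
    exact hzne (funext fun i => by have := h i; simp [hddef] at this; linarith)
  obtain ⟨i1, hi1⟩ := hdne
  have hn2 : 0 < ∑ i, d i ^ 2 := by
    refine Finset.sum_pos' (fun i _ => sq_nonneg _) ⟨i1, mem_univ _, ?_⟩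
    positivity
  set n := Real.sqrt (∑ i, d i ^ 2) with hndef
  have hn : 0 < n := Real.sqrt_pos.mpr hn2
  set f := ∑ i, α i * d i ^ 2 with hfdef
  have hf : 0 < f := by
    refine Finset.sum_pos' (fun i _ => mul_nonneg (hα i).le (sq_nonneg _))
      ⟨i1, mem_univ _, ?_⟩
    have := hα i1
    positivity
  -- the comparison vector u ∈ V
  set u : I → ℝ := fun i => δ * d i / n with hudef
  have huy : ∑ i, ystar i * u i = 0 := by
    have : ∀ i ∈ Finset.univ, ystar i * u i = (δ / n) * (ystar i * d i) := by
      intro i _; simp only [hudef]; ring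
    rw [Finset.sum_congr rfl this, ← Finset.mul_sum, hyd, mul_zero]
  have hun : Real.sqrt (∑ i, u i ^ 2) ≤ δ := by
    have : ∑ i, u i ^ 2 = δ ^ 2 / n ^ 2 * ∑ i, d i ^ 2 := by
      rw [Finset.mul_sum]
      exact Finset.sum_congr rfl fun i _ => by simp only [hudef]; ring
    rw [this, Real.sq_sqrt hn2.le]
    have hne := hn.ne'
    have : δ ^ 2 / (∑ i, d i ^ 2) * ∑ i, d i ^ 2 = δ ^ 2 := by field_simp
    rw [Real.sq_sqrt hn2.le] at *
    rw [this, Real.sqrt_sq hδ.le]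
  have hu : u ∈ V := hball u huy hun
  -- pieces of the first inequality
  have hyv : ∑ i, ystar i * v i ≤ 0 := hVmax.2 ⟨v, hv, rfl⟩
  have hzsv : ∀ v' : I → ℝ, ∑ i, α i * (zeta α ystar i * w) * v' i
      = (w / S) * ∑ i, ystar i * v' i := by
    intro v'
    rw [Finset.mul_sum]
    refine Finset.sum_congr rfl fun i _ => ?_
    rw [hαzs i]; ring
  have hzsv_le : ∑ i, α i * (zeta α ystar i * w) * v i ≤ 0 := by
    rw [hzsv]
    exact mul_nonpos_of_nonneg_of_nonpos (div_nonneg hw0 hS0.le) hyv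
  have hzsu : ∑ i, α i * (zeta α ystar i * w) * u i = 0 := by
    rw [hzsv, huy, mul_zero]
  have hzu : ∑ i, α i * z i * u i = (δ / n) * f := by
    have h1 : ∑ i, α i * z i * u i
        = (∑ i, α i * d i * u i) + ∑ i, α i * (zeta α ystar i * w) * u i := by
      rw [← Finset.sum_add_distrib]
      exact Finset.sum_congr rfl fun i _ => by simp only [hddef]; ring
    have h2 : ∑ i, α i * d i * u i = (δ / n) * f := by
      rw [hfdef, Finset.mul_sum]
      exact Finset.sum_congr rfl fun i _ => by simp only [hudef]; ring
    rw [h1, h2, hzsu, add_zero]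
  have hzv : ∑ i, α i * d i * (-(v i))
      = -(∑ i, α i * z i * v i) + ∑ i, α i * (zeta α ystar i * w) * v i := by
    rw [← Finset.sum_neg_distrib, ← Finset.sum_add_distrib]
    exact Finset.sum_congr rfl fun i _ => by simp only [hddef]; ring
  have hmain : ∑ i, α i * d i * (-(v i)) ≤ -δ * f / n := by
    have h3 : (δ / n) * f ≤ ∑ i, α i * z i * v i := hzu ▸ hvmax u hu
    have : ∑ i, α i * d i * (-(v i)) ≤ -((δ / n) * f) := by
      rw [hzv]; linarith
    calc ∑ i, α i * d i * (-(v i)) ≤ -((δ / n) * f) := this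
      _ = -δ * f / n := by ring
  -- second inequality
  set m := Finset.univ.inf' Finset.univ_nonempty α with hmdef
  have hm : 0 < m := by
    rw [hmdef, Finset.lt_inf'_iff]
    exact fun i _ => hα i
  have hmle : m * (∑ i, d i ^ 2) ≤ f := by
    rw [Finset.mul_sum, hfdef]
    exact Finset.sum_le_sum fun i _ =>
      mul_le_mul_of_nonneg_right (Finset.inf'_le _ (mem_univ i)) (sq_nonneg _)
  have hnle : n ≤ Real.sqrt f / Real.sqrt m := by
    have hle : (∑ i, d i ^ 2) ≤ f / m := (le_div_iff₀ hm).mpr (by linarith [hmle])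
    calc n ≤ Real.sqrt (f / m) := Real.sqrt_le_sqrt hle
      _ = Real.sqrt f / Real.sqrt m := Real.sqrt_div hf.le m
  have hkey : Real.sqrt m * Real.sqrt f * n ≤ f := by
    calc Real.sqrt m * Real.sqrt f * n
        ≤ Real.sqrt m * Real.sqrt f * (Real.sqrt f / Real.sqrt m) := by
          have : 0 ≤ Real.sqrt m * Real.sqrt f := by positivity
          exact mul_le_mul_of_nonneg_left hnle this
      _ = f := by
          have hsm : Real.sqrt m ≠ 0 := (Real.sqrt_pos.mpr hm).ne'
          field_simp
          rw [Real.sq_sqrt hf.le]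
  have hsecond : -δ * f / n ≤ -δ * Real.sqrt m * Real.sqrt f := by
    rw [neg_mul, neg_mul, neg_mul, neg_div, neg_le_neg_iff]
    rw [le_div_iff₀ hn]
    nlinarith [hkey, hδ.le, Real.sqrt_nonneg m, Real.sqrt_nonneg f, hn.le]
  exact ⟨hmain, hsecond⟩
end

section
/- Let f : [0,∞) → ℝ be a locally Lipschitz function with f(t) ≥ 0 for all t ≥ 0, and let c > 0. Suppose that for (Lebesgue) almost every t > 0, f is differentiable at t and f′(t) ≤ −c·√(f(t)). Then f(t) = 0 for all t ≥ 2√(f(0))/c; moreover, if f(τ₁) = 0 for some τ₁ ≥ 0, then f(t) = 0 for all t ≥ τ₁. -/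
open MeasureTheory Set Filter Metric

/-- On a compact interval inside `Ici 0`, a locally Lipschitz function has a uniform
Lipschitz-type bound. -/
lemma exists_lip_bound {f : ℝ → ℝ} (hLip : LocallyLipschitzOn (Set.Ici 0) f)
    {a b : ℝ} (ha : 0 ≤ a) :
    ∃ K : ℝ, 0 ≤ K ∧ ∀ x ∈ Icc a b, ∀ y ∈ Icc a b, |f x - f y| ≤ K * |x - y| := by
  rcases le_or_gt b a with hba | hab
  · refine ⟨0, le_rfl, fun x hx y hy => ?_⟩
    have hx' : x = a := le_antisymm (hx.2.trans hba) hx.1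
    have hy' : y = a := le_antisymm (hy.2.trans hba) hy.1
    simp [hx', hy']
  · have H : ∀ t : Icc a b, ∃ (K : NNReal) (V : Set ℝ), IsOpen V ∧ (t : ℝ) ∈ V ∧
        LipschitzOnWith K f (V ∩ Set.Ici 0) := by
      rintro ⟨t, hta, htb⟩
      obtain ⟨K, s, hs, hKs⟩ := hLip (Set.mem_Ici.2 (ha.trans hta))
      obtain ⟨V, hVopen, htV, hVs⟩ := mem_nhdsWithin.1 hs
      exact ⟨K, V, hVopen, htV, hKs.mono hVs⟩
    choose Kt Vt hVopen hVmem hVlip using H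
    have hcover : Icc a b ⊆ ⋃ t : Icc a b, Vt t :=
      fun x hx => Set.mem_iUnion.2 ⟨⟨x, hx⟩, hVmem _⟩
    obtain ⟨T, hT⟩ := isCompact_Icc.elim_finite_subcover Vt hVopen hcover
    have hT' : Icc a b ⊆ ⋃ t : T, Vt t := by
      intro x hx
      obtain ⟨i, hiT, hxi⟩ := Set.mem_iUnion₂.1 (hT hx)
      exact Set.mem_iUnion.2 ⟨⟨i, hiT⟩, hxi⟩
    obtain ⟨δ, hδ, hball⟩ := lebesgue_number_lemma_of_metric isCompact_Icc
      (fun i : T => hVopen i) hT'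
    obtain ⟨Mb, hMb⟩ := isCompact_Icc.exists_bound_of_continuousOn
      (hLip.continuousOn.mono (fun x (hx : x ∈ Icc a b) => Set.mem_Ici.2 (ha.trans hx.1)))
    have hMb0 : 0 ≤ Mb := le_trans (norm_nonneg _) (hMb a (Set.left_mem_Icc.2 hab.le))
    set Kmax : NNReal := T.sup Kt with hKmax
    refine ⟨max (Kmax : ℝ) (2 * Mb / δ), le_max_of_le_left Kmax.coe_nonneg, ?_⟩
    intro x hx y hy
    rcases lt_or_ge (dist x y) δ with hd | hd
    · obtain ⟨i, hi⟩ := hball x hx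
      have hxV : x ∈ Vt i ∩ Set.Ici 0 :=
        ⟨hi (mem_ball_self hδ), Set.mem_Ici.2 (ha.trans hx.1)⟩
      have hyV : y ∈ Vt i ∩ Set.Ici 0 :=
        ⟨hi (by simpa [mem_ball, dist_comm] using hd), Set.mem_Ici.2 (ha.trans hy.1)⟩
      have := (hVlip i).dist_le_mul x hxV y hyV
      rw [Real.dist_eq, Real.dist_eq] at this
      refine this.trans ?_
      have hKle : (Kt i : ℝ) ≤ (Kmax : ℝ) := by
        exact_mod_cast Finset.le_sup (f := Kt) i.2
      exact mul_le_mul_of_nonneg_right (hKle.trans (le_max_left _ _)) (abs_nonneg _)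
    · rw [Real.dist_eq] at hd
      have h1 : |f x - f y| ≤ 2 * Mb := by
        have := hMb x hx
        have := hMb y hy
        rw [Real.norm_eq_abs] at *
        calc |f x - f y| ≤ |f x| + |f y| := abs_sub _ _
          _ ≤ 2 * Mb := by linarith
      have h2 : 2 * Mb ≤ (2 * Mb / δ) * |x - y| := by
        rw [div_mul_eq_mul_div, le_div_iff₀ hδ]
        exact mul_le_mul_of_nonneg_left hd (by linarith)
      exact h1.trans (h2.trans (mul_le_mul_of_nonneg_right (le_max_right _ _) (abs_nonneg _)))

/-- FTC-type comparison for Lipschitz functions with an a.e. derivative bound. -/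
lemma lipschitz_ae_deriv_le {g : ℝ → ℝ} {a b m K : ℝ} (hab : a ≤ b) (hK : 0 ≤ K)
    (hg : ∀ x ∈ Icc a b, ∀ y ∈ Icc a b, |g x - g y| ≤ K * |x - y|)
    (hd : ∀ᵐ t ∂(volume.restrict (Set.Ioo a b)), ∃ d, HasDerivAt g d t ∧ d ≤ m) :
    g b ≤ g a + m * (b - a) := by
  rcases eq_or_lt_of_le hab with rfl | hab'
  · simp
  set C : ℝ := K + |m| + 1 with hC
  have hC0 : 0 < C := by positivity
  refine le_of_forall_pos_le_add fun ε hε => ?_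
  set δ : ℝ := ε / (1 + (b - a) + C) with hδdef
  have hden : 0 < 1 + (b - a) + C := by nlinarith
  have hδ : 0 < δ := div_pos hε hden
  have hδε : δ * (1 + (b - a) + C) = ε := div_mul_cancel₀ _ hden.ne'
  -- the bad set is null
  rw [ae_restrict_iff' measurableSet_Ioo] at hd
  set E : Set ℝ := {a} ∪ {t | t ∈ Set.Ioo a b ∧ ¬∃ d, HasDerivAt g d t ∧ d ≤ m} with hE
  have hE0 : volume E = 0 := by
    refine measure_union_null (measure_singleton a) ?_
    have h2 := hd
    rw [MeasureTheory.ae_iff] at h2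
    rw [show {t | t ∈ Set.Ioo a b ∧ ¬∃ d, HasDerivAt g d t ∧ d ≤ m}
        = {t | ¬(t ∈ Set.Ioo a b → ∃ d, HasDerivAt g d t ∧ d ≤ m)} by
      ext t; simp only [Set.mem_setOf_eq, Classical.not_imp]]
    exact h2
  obtain ⟨U, hEU, hUopen, hUvol⟩ := Set.exists_isOpen_lt_of_lt E (ENNReal.ofReal δ)
    (by rw [hE0]; exact ENNReal.ofReal_pos.2 hδ)
  have hUfin : ∀ x, volume (U ∩ Set.Ioo a x) ≠ ⊤ :=
    fun x => ((measure_mono Set.inter_subset_left).trans_lt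
      (hUvol.trans_le le_top)).ne
  set M : ℝ → ℝ := fun x => (volume (U ∩ Set.Ioo a x)).toReal with hM
  have hMmono : ∀ {x y}, x ≤ y → M x ≤ M y := by
    intro x y hxy
    exact ENNReal.toReal_mono (hUfin y)
      (measure_mono (Set.inter_subset_inter_right _ (Set.Ioo_subset_Ioo le_rfl hxy)))
  have hMlip : ∀ {x y}, x ≤ y → M y ≤ M x + (y - x) := by
    intro x y hxy
    have hsub : U ∩ Set.Ioo a y ⊆ (U ∩ Set.Ioo a x) ∪ Set.Ico x y := by
      rintro w ⟨hwU, hwa, hwy⟩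
      rcases lt_or_ge w x with h | h
      · exact Or.inl ⟨hwU, hwa, h⟩
      · exact Or.inr ⟨h, hwy⟩
    have h1 : volume (U ∩ Set.Ioo a y) ≤ volume (U ∩ Set.Ioo a x) + ENNReal.ofReal (y - x) := by
      refine (measure_mono hsub).trans ?_
      refine (measure_union_le _ _).trans ?_
      rw [Real.volume_Ico]
    have h2 := ENNReal.toReal_mono (by
        exact ENNReal.add_ne_top.2 ⟨hUfin x, ENNReal.ofReal_ne_top⟩) h1
    rw [ENNReal.toReal_add (hUfin x) ENNReal.ofReal_ne_top,
      ENNReal.toReal_ofReal (by linarith)] at h2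
    exact h2
  have hMcont : Continuous M := by
    refine (LipschitzWith.of_dist_le_mul (K := 1) fun x y => ?_).continuous
    rw [NNReal.coe_one, one_mul, Real.dist_eq, Real.dist_eq]
    rcases le_total x y with h | h
    · rw [abs_of_nonpos (by linarith [hMmono h]), abs_of_nonpos (by linarith)]
      linarith [hMlip h]
    · rw [abs_of_nonneg (by linarith [hMmono h]), abs_of_nonneg (by linarith)]
      linarith [hMlip h]
  have hMa : M a = 0 := by simp [hM]
  have hMb : M b ≤ δ := by
    have h1 : volume (U ∩ Set.Ioo a b) ≤ ENNReal.ofReal δ :=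
      (measure_mono Set.inter_subset_left).trans hUvol.le
    exact (ENNReal.toReal_le_of_le_ofReal hδ.le h1)
  -- increment property inside U
  have hMincr : ∀ {x z}, a ≤ x → x ∈ U → x < z → Set.Ioo x z ⊆ U → M x + (z - x) ≤ M z := by
    intro x z hax hxU hxz hsub
    have hdisj : Disjoint (U ∩ Set.Ioo a x) (Set.Ioo x z) := by
      refine Set.disjoint_left.2 ?_
      rintro w ⟨_, _, hwx⟩ ⟨hxw, _⟩
      exact absurd hwx (not_lt.2 hxw.le)
    have hsub2 : (U ∩ Set.Ioo a x) ∪ Set.Ioo x z ⊆ U ∩ Set.Ioo a z := by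
      rintro w (⟨hwU, hwa, hwx⟩ | ⟨hxw, hwz⟩)
      · exact ⟨hwU, hwa, hwx.trans hxz⟩
      · exact ⟨hsub ⟨hxw, hwz⟩, hax.trans_lt hxw, hwz⟩
    have h1 : volume (U ∩ Set.Ioo a x) + volume (Set.Ioo x z)
        ≤ volume (U ∩ Set.Ioo a z) := by
      rw [← measure_union hdisj measurableSet_Ioo]
      exact measure_mono hsub2
    have h2 := ENNReal.toReal_mono (hUfin z) h1
    rw [ENNReal.toReal_add (hUfin x) (by simp [Real.volume_Ioo]),
      Real.volume_Ioo, ENNReal.toReal_ofReal (by linarith)] at h2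
    exact h2
  -- the fencing argument
  set F : ℝ → ℝ := fun x => g x - C * M x with hF
  set B : ℝ → ℝ := fun x => g a + δ + (m + δ) * (x - a) with hB
  have hgcont : ContinuousOn g (Set.Icc a b) := by
    refine (LipschitzOnWith.of_dist_le_mul (K := ⟨K, hK⟩) fun x hx y hy => ?_).continuousOn
    rw [Real.dist_eq, Real.dist_eq]
    exact hg x hx y hy
  have hFcont : ContinuousOn F (Set.Icc a b) :=
    hgcont.sub ((hMcont.continuousOn).const_smul C)
  have hBderiv : ∀ x, HasDerivAt B (m + δ) x := by
    intro x
    have h1 : HasDerivAt (fun x : ℝ => x - a) 1 x := (hasDerivAt_id x).sub_const a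
    have h2 := (h1.const_mul (m + δ)).const_add (g a + δ)
    simpa [hB] using h2
  have hslope : ∀ x ∈ Set.Ico a b, ∀ r, m < r →
      ∃ᶠ z in nhdsWithin x (Set.Ioi x), slope F x z < r := by
    intro x hx r hr
    have hslope_eq : ∀ z, x < z → slope F x z = slope g x z - C * slope M x z := by
      intro z hz
      rw [slope_def_field, slope_def_field, slope_def_field, hF]
      ring
    by_cases hxU : x ∈ U
    · -- in U: the penalty term dominates
      obtain ⟨δ', hδ', hball⟩ := Metric.isOpen_iff.1 hUopen x hxU
      have hxb : x < b := hx.2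
      have hmem : Set.Ioo x (min (x + δ') b) ∈ nhdsWithin x (Set.Ioi x) :=
        Ioo_mem_nhdsGT_of_mem ⟨le_rfl, lt_min (by linarith) hxb⟩
      refine Filter.Eventually.frequently (Filter.eventually_of_mem hmem fun z hz => ?_)
      have hxz : x < z := hz.1
      have hzb : z ≤ b := (hz.2.trans_le (min_le_right _ _)).le
      have hzδ' : z < x + δ' := hz.2.trans_le (min_le_left _ _)
      have hsubU : Set.Ioo x z ⊆ U := by
        intro w hw
        apply hball
        rw [Metric.mem_ball, Real.dist_eq, abs_of_pos (by linarith [hw.1])]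
        linarith [hw.2]
      have hMz := hMincr hx.1 hxU hxz hsubU
      have hslopeM : 1 ≤ slope M x z := by
        rw [slope_def_field, le_div_iff₀ (by linarith)]
        linarith
      have hslopeg : slope g x z ≤ K := by
        rw [slope_def_field, div_le_iff₀ (by linarith)]
        have := hg z ⟨(hx.1.trans hxz.le), hzb⟩ x ⟨hx.1, hxb.le⟩
        rw [abs_of_pos (by linarith : (0:ℝ) < z - x)] at this
        calc g z - g x ≤ |g z - g x| := le_abs_self _
          _ ≤ K * (z - x) := this
      rw [hslope_eq z hxz]
      have : C * 1 ≤ C * slope M x z := mul_le_mul_of_nonneg_left hslopeM hC0.le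
      have habs : -|m| ≤ m := neg_abs_le m
      nlinarith
    · -- not in U: we have a true derivative there
      have hxE : x ∉ E := fun h => hxU (hEU h)
      have hxa : x ≠ a := by
        intro h; exact hxE (Or.inl (by simp [h]))
      have hxIoo : x ∈ Set.Ioo a b := ⟨lt_of_le_of_ne hx.1 (Ne.symm hxa), hx.2⟩
      have hP : ∃ d, HasDerivAt g d x ∧ d ≤ m := by
        by_contra h
        exact hxE (Or.inr ⟨hxIoo, h⟩)
      obtain ⟨d, hdg, hdm⟩ := hP
      have htendsto : Filter.Tendsto (slope g x) (nhdsWithin x (Set.Ioi x)) (nhds d) :=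
        (hasDerivAt_iff_tendsto_slope.1 hdg).mono_left
          (nhdsWithin_mono x fun z hz => ne_of_gt hz)
      have hev : ∀ᶠ z in nhdsWithin x (Set.Ioi x), slope g x z < r :=
        htendsto.eventually_lt_const (lt_of_le_of_lt hdm hr)
      refine Filter.Eventually.frequently ((hev.and self_mem_nhdsWithin).mono ?_)
      rintro z ⟨hzr, hzx⟩
      rw [hslope_eq z hzx]
      have hMz : 0 ≤ slope M x z := by
        rw [slope_def_field]
        exact div_nonneg (sub_nonneg.2 (hMmono hzx.le)) (by linarith)
      nlinarith
  have hbound : ∀ x ∈ Set.Ico a b, F x = B x → m < m + δ := fun _ _ _ => by linarith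
  have hFa : F a ≤ B a := by simp [hF, hB, hMa]; linarith
  have := image_le_of_liminf_slope_right_lt_deriv_boundary (f := F) (f' := fun _ => m)
    hFcont hslope hFa hBderiv hbound (Set.right_mem_Icc.2 hab)
  rw [hF, hB] at this
  simp only at this
  have hCM : C * M b ≤ C * δ := mul_le_mul_of_nonneg_left hMb hC0.le
  nlinarith

open MeasureTheory in
/-- The Lyapunov ODE comparison lemma used in the proof of Theorem 6: if a
nonnegative locally Lipschitz function satisfies `f' ≤ -c √f` a.e., then it
hits `0` by time `2√(f 0)/c` and stays at `0` afterwards. -/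
theorem lyapunov_hits_zero (f : ℝ → ℝ) (c : ℝ) (hc : 0 < c)
    (hLip : LocallyLipschitzOn (Set.Ici 0) f)
    (hnonneg : ∀ t, 0 ≤ t → 0 ≤ f t)
    (hderiv : ∀ᵐ t ∂(volume.restrict (Set.Ioi (0 : ℝ))),
      ∃ d : ℝ, HasDerivAt f d t ∧ d ≤ -c * Real.sqrt (f t)) :
    (∀ t, 2 * Real.sqrt (f 0) / c ≤ t → f t = 0) ∧
    ∀ τ₁, 0 ≤ τ₁ → f τ₁ = 0 → ∀ t, τ₁ ≤ t → f t = 0 := by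
  -- Step A: f is antitone on [0, ∞)
  have hanti : ∀ a b : ℝ, 0 ≤ a → a ≤ b → f b ≤ f a := by
    intro a b ha hab
    obtain ⟨K, hK0, hK⟩ := exists_lip_bound hLip (b := b) ha
    have hsub : Set.Ioo a b ⊆ Set.Ioi (0 : ℝ) := fun t ht => lt_of_le_of_lt ha ht.1
    have hd : ∀ᵐ t ∂(volume.restrict (Set.Ioo a b)), ∃ d, HasDerivAt f d t ∧ d ≤ 0 := by
      have h1 := ae_restrict_of_ae_restrict_of_subset hsub hderiv
      have h2 : ∀ᵐ t ∂(volume.restrict (Set.Ioo a b)), t ∈ Set.Ioo a b :=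
        ae_restrict_mem measurableSet_Ioo
      filter_upwards [h1, h2] with t ⟨d, hdf, hdm⟩ ht
      refine ⟨d, hdf, hdm.trans ?_⟩
      have : 0 ≤ Real.sqrt (f t) := Real.sqrt_nonneg _
      nlinarith
    have := lipschitz_ae_deriv_le hab hK0 hK hd
    linarith
  have hpart2 : ∀ τ₁, 0 ≤ τ₁ → f τ₁ = 0 → ∀ t, τ₁ ≤ t → f t = 0 := by
    intro τ₁ hτ₁ hfτ₁ t ht
    have h1 := hanti τ₁ t hτ₁ ht
    have h2 := hnonneg t (hτ₁.trans ht)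
    linarith
  refine ⟨?_, hpart2⟩
  intro t ht
  by_cases hf0 : f 0 = 0
  · exact hpart2 0 le_rfl hf0 t (by
      refine le_trans ?_ ht
      positivity)
  · have hf0pos : 0 < f 0 := lt_of_le_of_ne (hnonneg 0 le_rfl) (Ne.symm hf0)
    have hT0 : 0 < 2 * Real.sqrt (f 0) / c := by
      have := Real.sqrt_pos.2 hf0pos
      positivity
    have ht0 : 0 < t := lt_of_lt_of_le hT0 ht
    by_contra hft
    have hftpos : 0 < f t := lt_of_le_of_ne (hnonneg t ht0.le) (Ne.symm hft)
    have hfs : ∀ s, 0 ≤ s → s ≤ t → f t ≤ f s := fun s hs hst => hanti s t hs hst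
    set g : ℝ → ℝ := fun s => Real.sqrt (f s) with hgdef
    have hsε : 0 < Real.sqrt (f t) := Real.sqrt_pos.2 hftpos
    -- sqrt difference bound
    have hsqrt_diff : ∀ u v : ℝ, f t ≤ u → f t ≤ v →
        |Real.sqrt u - Real.sqrt v| ≤ |u - v| / (2 * Real.sqrt (f t)) := by
      intro u v hu hv
      have hu0 : 0 ≤ u := hftpos.le.trans hu
      have hv0 : 0 ≤ v := hftpos.le.trans hv
      have hsu : Real.sqrt (f t) ≤ Real.sqrt u := Real.sqrt_le_sqrt hu
      have hsv : Real.sqrt (f t) ≤ Real.sqrt v := Real.sqrt_le_sqrt hv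
      have hsu2 : Real.sqrt u ^ 2 = u := Real.sq_sqrt hu0
      have hsv2 : Real.sqrt v ^ 2 = v := Real.sq_sqrt hv0
      rw [le_div_iff₀ (by positivity)]
      rcases le_total (Real.sqrt u) (Real.sqrt v) with h | h
      · rw [abs_of_nonpos (by linarith), abs_of_nonpos (by nlinarith)]
        nlinarith
      · rw [abs_of_nonneg (by linarith), abs_of_nonneg (by nlinarith)]
        nlinarith
    obtain ⟨K, hK0, hK⟩ := exists_lip_bound hLip (b := t) (le_refl 0)
    have hgK : ∀ x ∈ Set.Icc 0 t, ∀ y ∈ Set.Icc 0 t,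
        |g x - g y| ≤ (K / (2 * Real.sqrt (f t))) * |x - y| := by
      intro x hx y hy
      have h1 := hsqrt_diff (f x) (f y) (hfs x hx.1 hx.2) (hfs y hy.1 hy.2)
      refine h1.trans ?_
      rw [div_mul_eq_mul_div, div_le_div_iff_of_pos_right (by positivity)]
      exact hK x hx y hy
    have hgK0 : 0 ≤ K / (2 * Real.sqrt (f t)) := by positivity
    have hsubt : Set.Ioo (0:ℝ) t ⊆ Set.Ioi (0 : ℝ) := fun s hs => hs.1
    have hd : ∀ᵐ s ∂(volume.restrict (Set.Ioo (0:ℝ) t)),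
        ∃ d, HasDerivAt g d s ∧ d ≤ -c / 2 := by
      have h1 := ae_restrict_of_ae_restrict_of_subset hsubt hderiv
      have h2 : ∀ᵐ s ∂(volume.restrict (Set.Ioo (0:ℝ) t)), s ∈ Set.Ioo (0:ℝ) t :=
        ae_restrict_mem measurableSet_Ioo
      filter_upwards [h1, h2] with s ⟨d, hdf, hdm⟩ hs
      have hfspos : 0 < f s := lt_of_lt_of_le hftpos (hfs s hs.1.le hs.2.le)
      have hss : 0 < Real.sqrt (f s) := Real.sqrt_pos.2 hfspos
      have hcomp : HasDerivAt g (1 / (2 * Real.sqrt (f s)) * d) s :=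
        (Real.hasDerivAt_sqrt hfspos.ne').comp s hdf
      refine ⟨_, hcomp, ?_⟩
      have h3 : 1 / (2 * Real.sqrt (f s)) * d ≤
          1 / (2 * Real.sqrt (f s)) * (-c * Real.sqrt (f s)) :=
        mul_le_mul_of_nonneg_left hdm (by positivity)
      refine h3.trans (le_of_eq ?_)
      field_simp
    have := lipschitz_ae_deriv_le ht0.le hgK0 hgK hd
    -- g t ≤ g 0 + (-c/2) * t ≤ 0
    have hg0 : g 0 = Real.sqrt (f 0) := rfl
    have hct : Real.sqrt (f 0) ≤ c * t / 2 := by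
      rw [div_le_iff₀ hc, mul_comm] at ht
      linarith [ht]
    have hgt : g t ≤ 0 := by
      rw [hg0] at this
      have : g t ≤ Real.sqrt (f 0) + -c / 2 * (t - 0) := this
      nlinarith
    exact absurd hgt (not_le.2 hsε)
end

section
/- Let ℐ (of size I) and 𝒥 (of size J) be finite index sets, R, R′ ∈ ℝ^{ℐ×𝒥}, y* ∈ ℝ^ℐ nonzero, α ∈ ℝ^ℐ with α_i > 0, and ζ^α_i = (y*_i/α_i)/(Σ_{i'} (y*_{i'})²/α_{i'}); set κ₁ = Σ_i (y*_i)²/α_i. Let E be a finite set of vectors a ∈ ℝ^𝒥 with 0 ≤ a_j ≤ 1, let a* ∈ E attain max_{a∈E} Σ_{i,j} y*_i R_{ij} a_j, set E* = {a ∈ E : Σ_{i,j} y*_i R_{ij} a_j = Σ_{i,j} y*_i R_{ij} a*_j}, assume E ≠ E*, and set ε₁ = Σ_{i,j} y*_i R_{ij} a*_j − max_{a∈E∖E*} Σ_{i,j} y*_i R_{ij} a_j > 0. Let κ₀ ≥ max_{a∈E} |R′a| (max norm), and let ε₀ > 0 satisfy ε₀ ≤ ε₁/(3(|α|·κ₀·κ₁·I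 + J)). Suppose z ∈ ℝ^ℐ with z ≥ 0 and w := Σ_i y*_i z_i > 0 satisfy |z/w − ζ^α| ≤ ε₀ in the max norm, and suppose |Σ_i y*_i (R′_{ij} − R_{ij})| ≤ ε₀ for every j ∈ 𝒥. Then for every a ∈ E ∖ E*: Σ_i α_i z_i (R′a*)_i − Σ_i α_i z_i (R′a)_i ≥ w·(ε₁ − 2(|α|·κ₀·κ₁·I + J)·ε₀)/κ₁ > 0. -/
open Finset in
/-- The separation estimate (7.36)-(7.37) in the proof of Proposition 9:
near the lifted state, non-maximizing extreme allocations have strictly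
smaller network pressure. -/
theorem pressure_gap {I J : Type*} [Fintype I] [Fintype J] [Nonempty I]
    (R R' : I → J → ℝ) (ystar α : I → ℝ) (hy0 : ystar ≠ 0) (hα : ∀ i, 0 < α i)
    (E : Finset (J → ℝ)) (hE : ∀ a ∈ E, ∀ j, 0 ≤ a j ∧ a j ≤ 1)
    (astar : J → ℝ) (hastarE : astar ∈ E)
    (hastar : ∀ a ∈ E, ∑ i, ∑ j, ystar i * R i j * a j ≤
      ∑ i, ∑ j, ystar i * R i j * astar j)
    (hEne : ∃ a ∈ E, ∑ i, ∑ j, ystar i * R i j * a j ≠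
      ∑ i, ∑ j, ystar i * R i j * astar j)
    (ε₁ : ℝ) (hε₁pos : 0 < ε₁)
    (hε₁ : ∀ a ∈ E, ∑ i, ∑ j, ystar i * R i j * a j ≠
        ∑ i, ∑ j, ystar i * R i j * astar j →
      ∑ i, ∑ j, ystar i * R i j * a j ≤
        (∑ i, ∑ j, ystar i * R i j * astar j) - ε₁)
    (κ₀ : ℝ) (hκ₀ : ∀ a ∈ E, ∀ i, |∑ j, R' i j * a j| ≤ κ₀)
    (ε₀ : ℝ) (hε₀pos : 0 < ε₀)
    (hε₀ : ε₀ ≤ ε₁ / (3 * ((univ.sup' univ_nonempty fun i => |α i|) * κ₀ *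
      (∑ i, ystar i ^ 2 / α i) * (Fintype.card I) + (Fintype.card J))))
    (z : I → ℝ) (hz : ∀ i, 0 ≤ z i)
    (w : ℝ) (hwdef : w = ∑ i, ystar i * z i) (hwpos : 0 < w)
    (hclose : ∀ i, |z i / w - zeta α ystar i| ≤ ε₀)
    (hRclose : ∀ j, |∑ i, ystar i * (R' i j - R i j)| ≤ ε₀) :
    ∀ a ∈ E, ∑ i, ∑ j, ystar i * R i j * a j ≠
        ∑ i, ∑ j, ystar i * R i j * astar j →
      w * (ε₁ - 2 * ((univ.sup' univ_nonempty fun i => |α i|) * κ₀ *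
            (∑ i, ystar i ^ 2 / α i) * (Fintype.card I) + (Fintype.card J)) * ε₀) /
          (∑ i, ystar i ^ 2 / α i) ≤
        (∑ i, α i * z i * ∑ j, R' i j * astar j) -
          (∑ i, α i * z i * ∑ j, R' i j * a j) ∧
      0 < w * (ε₁ - 2 * ((univ.sup' univ_nonempty fun i => |α i|) * κ₀ *
            (∑ i, ystar i ^ 2 / α i) * (Fintype.card I) + (Fintype.card J)) * ε₀) /
          (∑ i, ystar i ^ 2 / α i) := by
  classical
  intro a haE hane
  set κ₁ := ∑ i, ystar i ^ 2 / α i with hκ₁def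
  set M := (univ.sup' univ_nonempty fun i => |α i|) with hMdef
  have hκ₁pos : 0 < κ₁ := by
    obtain ⟨i0, hi0⟩ := Function.ne_iff.mp hy0
    refine Finset.sum_pos' (fun i _ => div_nonneg (sq_nonneg _) (hα i).le)
      ⟨i0, Finset.mem_univ _, ?_⟩
    have h2 : 0 < ystar i0 ^ 2 := pow_two_pos_of_ne_zero hi0
    exact div_pos h2 (hα i0)
  have hM : ∀ i, |α i| ≤ M := fun i => Finset.le_sup' (fun i => |α i|) (Finset.mem_univ i)
  have hMpos : 0 < M :=
    lt_of_lt_of_le (hα (Classical.arbitrary I)) (le_trans (le_abs_self _) (hM _))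
  have hκ₀nn : 0 ≤ κ₀ :=
    le_trans (abs_nonneg _) (hκ₀ astar hastarE (Classical.arbitrary I))
  set K := M * κ₀ * κ₁ * (Fintype.card I) + (Fintype.card J) with hKdef
  have hKnn : 0 ≤ K := by
    rw [hKdef]; positivity
  have hKpos : 0 < K := by
    rcases hKnn.lt_or_eq with h | h
    · exact h
    · exfalso
      rw [← h, mul_zero, div_zero] at hε₀
      linarith
  have hgap : ε₁ / 3 ≤ ε₁ - 2 * K * ε₀ := by
    have h3K : 0 < 3 * K := by linarith
    have h1 : ε₀ * (3 * K) ≤ ε₁ := (le_div_iff₀ h3K).mp hε₀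
    nlinarith
  have hpos : 0 < w * (ε₁ - 2 * K * ε₀) / κ₁ :=
    div_pos (mul_pos hwpos (lt_of_lt_of_le (by linarith) hgap)) hκ₁pos
  refine ⟨?_, hpos⟩
  set δ : I → ℝ := fun i => z i / w - zeta α ystar i with hδdef
  set P : I → ℝ := fun i => (∑ j, R' i j * astar j) - (∑ j, R' i j * a j) with hPdef
  have hw0 : w ≠ 0 := hwpos.ne'
  have hδb : ∀ i, |δ i| ≤ ε₀ := fun i => by simpa only [hδdef] using hclose i
  have hzi : ∀ i, z i = w * (zeta α ystar i + δ i) := by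
    intro i
    simp only [hδdef]
    field_simp
    ring
  have hαζκ : ∀ i, α i * zeta α ystar i * κ₁ = ystar i := by
    intro i
    have hαi : α i ≠ 0 := (hα i).ne'
    simp only [zeta]
    rw [← hκ₁def]
    field_simp
  have hPb : ∀ i, |P i| ≤ 2 * κ₀ := by
    intro i
    simp only [hPdef]
    calc |(∑ j, R' i j * astar j) - ∑ j, R' i j * a j|
        ≤ |∑ j, R' i j * astar j| + |∑ j, R' i j * a j| := by
          rw [sub_eq_add_neg]
          exact (abs_add_le _ _).trans (by rw [abs_neg])
      _ ≤ κ₀ + κ₀ := add_le_add (hκ₀ astar hastarE i) (hκ₀ a haE i)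
      _ = 2 * κ₀ := by ring
  -- lower bound on ∑ᵢ yᵢ Pᵢ
  have hA : ε₁ - ε₀ * (Fintype.card J) ≤ ∑ i, ystar i * P i := by
    have h1 : ∑ i, ystar i * P i
        = ∑ j, (astar j - a j) * (∑ i, ystar i * R i j)
          + ∑ j, (astar j - a j) * (∑ i, ystar i * (R' i j - R i j)) := by
      rw [← Finset.sum_add_distrib]
      calc ∑ i, ystar i * P i
          = ∑ i, ∑ j, ystar i * R' i j * (astar j - a j) := by
            refine Finset.sum_congr rfl fun i _ => ?_
            simp only [hPdef]
            rw [← Finset.sum_sub_distrib, Finset.mul_sum]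
            exact Finset.sum_congr rfl fun j _ => by ring
        _ = ∑ j, ∑ i, ystar i * R' i j * (astar j - a j) := Finset.sum_comm
        _ = ∑ j, ((astar j - a j) * (∑ i, ystar i * R i j)
              + (astar j - a j) * (∑ i, ystar i * (R' i j - R i j))) := by
            refine Finset.sum_congr rfl fun j _ => ?_
            rw [Finset.mul_sum, Finset.mul_sum, ← Finset.sum_add_distrib]
            exact Finset.sum_congr rfl fun i _ => by ring
    rw [h1]
    have hrw : ∀ b : J → ℝ, (∑ i, ∑ j, ystar i * R i j * b j)
        = ∑ j, b j * ∑ i, ystar i * R i j := by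
      intro b
      rw [Finset.sum_comm]
      refine Finset.sum_congr rfl fun j _ => ?_
      rw [← Finset.sum_mul, mul_comm]
    have h2 : ε₁ ≤ ∑ j, (astar j - a j) * ∑ i, ystar i * R i j := by
      have h3 := hε₁ a haE hane
      have e1 : ∑ j, (astar j - a j) * ∑ i, ystar i * R i j
          = (∑ i, ∑ j, ystar i * R i j * astar j) - ∑ i, ∑ j, ystar i * R i j * a j := by
        rw [hrw astar, hrw a, ← Finset.sum_sub_distrib]
        exact Finset.sum_congr rfl fun j _ => by ring
      rw [e1]; linarith
    have h3 : -(ε₀ * (Fintype.card J))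
        ≤ ∑ j, (astar j - a j) * ∑ i, ystar i * (R' i j - R i j) := by
      have hterm : ∀ j ∈ (univ : Finset J),
          -ε₀ ≤ (astar j - a j) * ∑ i, ystar i * (R' i j - R i j) := by
        intro j _
        have habs : |(astar j - a j) * ∑ i, ystar i * (R' i j - R i j)| ≤ ε₀ := by
          rw [abs_mul]
          have hb1 : |astar j - a j| ≤ 1 := by
            have p := hE astar hastarE j
            have q := hE a haE j
            rw [abs_le]
            constructor <;> linarith [p.1, p.2, q.1, q.2]
          calc |astar j - a j| * |∑ i, ystar i * (R' i j - R i j)|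
              ≤ 1 * ε₀ := mul_le_mul hb1 (hRclose j) (abs_nonneg _) one_pos.le
            _ = ε₀ := one_mul _
        linarith [neg_abs_le ((astar j - a j) * ∑ i, ystar i * (R' i j - R i j))]
      calc -(ε₀ * (Fintype.card J)) = ∑ _j : J, -ε₀ := by
            rw [Finset.sum_const, Finset.card_univ, nsmul_eq_mul]; ring
        _ ≤ _ := Finset.sum_le_sum hterm
    linarith
  -- bound on the perturbation term
  have hT : |∑ i, α i * δ i * P i| ≤ (Fintype.card I) * (M * (ε₀ * (2 * κ₀))) := by
    calc |∑ i, α i * δ i * P i| ≤ ∑ i, |α i * δ i * P i| :=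
          Finset.abs_sum_le_sum_abs _ _
      _ ≤ ∑ _i : I, M * (ε₀ * (2 * κ₀)) := by
          refine Finset.sum_le_sum fun i _ => ?_
          rw [abs_mul, abs_mul]
          calc |α i| * |δ i| * |P i| ≤ (M * ε₀) * (2 * κ₀) :=
                mul_le_mul (mul_le_mul (hM i) (hδb i) (abs_nonneg _) hMpos.le)
                  (hPb i) (abs_nonneg _) (mul_nonneg hMpos.le hε₀pos.le)
            _ = M * (ε₀ * (2 * κ₀)) := by ring
      _ = (Fintype.card I) * (M * (ε₀ * (2 * κ₀))) := by
          rw [Finset.sum_const, Finset.card_univ, nsmul_eq_mul]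
  -- identity for the difference of pressures
  have hS : (∑ i, α i * z i * ∑ j, R' i j * astar j)
      - ∑ i, α i * z i * ∑ j, R' i j * a j = ∑ i, α i * z i * P i := by
    rw [← Finset.sum_sub_distrib]
    refine Finset.sum_congr rfl fun i _ => ?_
    simp only [hPdef]
    ring
  have hDκ : (∑ i, α i * z i * P i) * κ₁
      = w * ((∑ i, ystar i * P i) + κ₁ * ∑ i, α i * δ i * P i) := by
    rw [Finset.sum_mul, mul_add, Finset.mul_sum, Finset.mul_sum, Finset.mul_sum,
      ← Finset.sum_add_distrib]
    refine Finset.sum_congr rfl fun i _ => ?_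
    rw [hzi i]
    linear_combination (w * P i) * hαζκ i
  rw [div_le_iff₀ hκ₁pos, hS, hDκ]
  have hTlb : -((Fintype.card I : ℝ) * (M * (ε₀ * (2 * κ₀)))) ≤ ∑ i, α i * δ i * P i :=
    neg_le_of_abs_le hT
  have hκT : κ₁ * -((Fintype.card I : ℝ) * (M * (ε₀ * (2 * κ₀))))
      ≤ κ₁ * ∑ i, α i * δ i * P i := mul_le_mul_of_nonneg_left hTlb hκ₁pos.le
  refine mul_le_mul_of_nonneg_left ?_ hwpos.le
  rw [hKdef]
  have hJnn : (0:ℝ) ≤ (Fintype.card J : ℝ) := Nat.cast_nonneg _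
  nlinarith [mul_nonneg hε₀pos.le hJnn]
end

section
/- Let (R, A) be network data whose static planning problem has a unique optimal solution (ρ*, x*) with ρ* = 1. Let (Z̄, T̄) be a fluid model solution under the maximum pressure policy with parameter α (α_i > 0 for all i) such that Z̄(0) = 0. Then Z̄(t) = 0 for all t ≥ 0, and T̄(t) = x*·t for all t ≥ 0. -/
open Finset

section Network

variable {I J K : Type*} [Fintype I] [Fintype J] [Fintype K] [DecidableEq J] [DecidableEq K]

/-- Assumptions on the capacity consumption matrix `A`: entries in `{0,1}`;
input processors only work on input activities and service processors only on
service activities; every activity uses some processor.  Here `JI` is the set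
of input activities (service activities are its complement) and `KI` the set
of input processors (service processors are its complement). -/
def NetData (A : K → J → ℝ) (JI : Finset J) (KI : Finset K) : Prop :=
  (∀ k j, A k j = 0 ∨ A k j = 1) ∧
  (∀ k j, ((k ∈ KI ∧ j ∉ JI) ∨ (k ∉ KI ∧ j ∈ JI)) → A k j = 0) ∧
  (∀ j, ∃ k, A k j = 1)

/-- The allocation set `𝒜`. -/
def Alloc (A : K → J → ℝ) (KI : Finset K) : Set (J → ℝ) :=
  {a | (∀ j, 0 ≤ a j) ∧ (∀ k, ∑ j, A k j * a j ≤ 1) ∧ ∀ k ∈ KI, ∑ j, A k j * a j = 1}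

/-- Feasibility for the static planning problem. -/
def SPPfeas (R : I → J → ℝ) (A : K → J → ℝ) (KI : Finset K) (ρ : ℝ) (x : J → ℝ) : Prop :=
  (∀ i, ∑ j, R i j * x j = 0) ∧ (∀ k ∈ KI, ∑ j, A k j * x j = 1) ∧
  (∀ k, k ∉ KI → ∑ j, A k j * x j ≤ ρ) ∧ (∀ j, 0 ≤ x j)

/-- Optimality for the static planning problem (minimize `ρ`). -/
def SPPopt (R : I → J → ℝ) (A : K → J → ℝ) (KI : Finset K) (ρ : ℝ) (x : J → ℝ) : Prop :=
  SPPfeas R A KI ρ x ∧ ∀ ρ' x', SPPfeas R A KI ρ' x' → ρ ≤ ρ'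

/-- Unique optimality for the static planning problem. -/
def SPPuniqueOpt (R : I → J → ℝ) (A : K → J → ℝ) (KI : Finset K) (ρ : ℝ) (x : J → ℝ) : Prop :=
  SPPopt R A KI ρ x ∧ ∀ ρ' x', SPPopt R A KI ρ' x' → ρ' = ρ ∧ x' = x

/-- Feasibility for the dual of the static planning problem. -/
def Dfeas (R : I → J → ℝ) (A : K → J → ℝ) (JI : Finset J) (KI : Finset K)
    (y : I → ℝ) (z : K → ℝ) : Prop :=
  (∀ j ∈ JI, ∑ i, y i * R i j ≤ - ∑ k ∈ KI, z k * A k j) ∧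
  (∀ j, j ∉ JI → ∑ i, y i * R i j ≤ ∑ k ∈ KIᶜ, z k * A k j) ∧
  (∑ k ∈ KIᶜ, z k = 1) ∧ (∀ k, k ∉ KI → 0 ≤ z k)

/-- Optimality for the dual problem (maximize `∑_{k ∈ KI} z k`). -/
def Dopt (R : I → J → ℝ) (A : K → J → ℝ) (JI : Finset J) (KI : Finset K)
    (y : I → ℝ) (z : K → ℝ) : Prop :=
  Dfeas R A JI KI y z ∧
    ∀ y' z', Dfeas R A JI KI y' z' → ∑ k ∈ KI, z' k ≤ ∑ k ∈ KI, z k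

/-- Unique optimality for the dual problem. -/
def DuniqueOpt (R : I → J → ℝ) (A : K → J → ℝ) (JI : Finset J) (KI : Finset K)
    (y : I → ℝ) (z : K → ℝ) : Prop :=
  Dopt R A JI KI y z ∧ ∀ y' z', Dopt R A JI KI y' z' → y' = y ∧ z' = z

end Network

/-- A fluid model solution under the maximum pressure policy with parameter `α`. -/
def FluidSol {I J K : Type*} [Fintype I] [Fintype J] [Fintype K] [DecidableEq J] [DecidableEq K]
    (R : I → J → ℝ) (A : K → J → ℝ) (KI : Finset K) (α : I → ℝ)
    (Z : ℝ → I → ℝ) (T : ℝ → J → ℝ) : Prop :=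
  (∀ t, 0 ≤ t → ∀ i, Z t i = Z 0 i - ∑ j, R i j * T t j) ∧
  (∀ t, 0 ≤ t → ∀ i, 0 ≤ Z t i) ∧
  (∀ s t, 0 ≤ s → s ≤ t → ∀ k ∈ KI, ∑ j, A k j * (T t j - T s j) = t - s) ∧
  (∀ s t, 0 ≤ s → s ≤ t → ∀ k, ∑ j, A k j * (T t j - T s j) ≤ t - s) ∧
  (∀ s t, 0 ≤ s → s ≤ t → ∀ j, T s j ≤ T t j) ∧
  (∀ j, T 0 j = 0) ∧
  (∀ t, 0 < t → ∀ (Z' : I → ℝ) (T' : J → ℝ),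
    (∀ i, HasDerivAt (fun s => Z s i) (Z' i) t) →
    (∀ j, HasDerivAt (fun s => T s j) (T' j) t) →
    ∑ i, α i * Z t i * ∑ j, R i j * T' j =
      sSup ((fun a => ∑ i, α i * Z t i * ∑ j, R i j * a j) '' Alloc A KI))


open Set MeasureTheory Filter Topology

/-- If `f` is Lipschitz-type bounded on `[a,b]` and has nonpositive derivative at a.e. point
of `(a,b)`, then `f b ≤ f a`. -/
lemma aux_antitone (f : ℝ → ℝ) (a b C : ℝ) (hab : a ≤ b)
    (hlip : ∀ s ∈ Set.Icc a b, ∀ t ∈ Set.Icc a b, |f t - f s| ≤ C * |t - s|)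
    (hae : ∀ᵐ t : ℝ, t ∈ Set.Ioo a b → ∃ d ≤ (0:ℝ), HasDerivAt f d t) :
    f b ≤ f a := by
  rcases eq_or_lt_of_le hab with rfl | hab'
  · exact le_rfl
  have hC : 0 ≤ C := by
    have h1 := hlip a ⟨le_rfl, hab⟩ b ⟨hab, le_rfl⟩
    have h2 : (0:ℝ) ≤ |f b - f a| := abs_nonneg _
    have h3 : |b - a| = b - a := abs_of_pos (by linarith)
    nlinarith
  -- suffices to prove the bound up to ε
  have main : ∀ ε : ℝ, 0 < ε → f b ≤ f a + ε * (1 + (b - a)) := by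
    intro ε hε
    -- bad set
    set B : Set ℝ := {t | ¬ (t ∈ Set.Ioo a b → ∃ d ≤ (0:ℝ), HasDerivAt f d t)} with hBdef
    have hB : volume B = 0 := by
      simpa [hBdef] using (MeasureTheory.ae_iff.1 hae)
    have hB' : volume (B ∪ {a}) ≤ 0 := by
      refine le_trans (measure_union_le _ _) ?_
      simp [hB]
    have hεC : 0 < ε / (C + 1) := by positivity
    obtain ⟨U, hBU, hUopen, hUvol⟩ :=
      Set.exists_isOpen_lt_of_lt (B ∪ {a}) (ENNReal.ofReal (ε / (C + 1)))
        (by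
          have : volume (B ∪ {a}) = 0 := le_antisymm hB' zero_le
          rw [this]
          exact ENNReal.ofReal_pos.2 hεC)
    have hUfin : volume U ≠ ⊤ := (hUvol.trans_le le_top).ne
    have hfin : ∀ t : ℝ, volume (U ∩ Set.Ioo a t) ≠ ⊤ :=
      fun t => ne_top_of_le_ne_top hUfin (measure_mono Set.inter_subset_left)
    set m : ℝ → ℝ := fun t => (volume (U ∩ Set.Ioo a t)).toReal with hmdef
    have hm_nonneg : ∀ t, 0 ≤ m t := fun t => ENNReal.toReal_nonneg
    have hm_mono : ∀ s t : ℝ, s ≤ t → m s ≤ m t := by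
      intro s t hst
      exact ENNReal.toReal_le_toReal (hfin s) (hfin t) |>.2
        (measure_mono (Set.inter_subset_inter_right _ (Set.Ioo_subset_Ioo_right hst)))
    have hm_lip : ∀ s t : ℝ, s ≤ t → m t ≤ m s + (t - s) := by
      intro s t hst
      have hsub : U ∩ Set.Ioo a t ⊆ (U ∩ Set.Ioo a s) ∪ Set.Icc s t := by
        rintro x ⟨hxU, hxa, hxt⟩
        rcases lt_or_ge x s with h | h
        · exact Or.inl ⟨hxU, hxa, h⟩
        · exact Or.inr ⟨h, hxt.le⟩
      have h1 : volume (U ∩ Set.Ioo a t) ≤ volume (U ∩ Set.Ioo a s) + ENNReal.ofReal (t - s) := by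
        refine le_trans (measure_mono hsub) ?_
        refine le_trans (measure_union_le _ _) ?_
        rw [Real.volume_Icc]
      calc m t ≤ ((volume (U ∩ Set.Ioo a s)) + ENNReal.ofReal (t - s)).toReal := by
            exact ENNReal.toReal_le_toReal (hfin t)
              (by simp [ENNReal.add_ne_top, hfin s]) |>.2 h1
        _ = m s + (t - s) := by
            rw [ENNReal.toReal_add (hfin s) (by simp), ENNReal.toReal_ofReal (by linarith)]
    have hm_grow : ∀ s t : ℝ, a ≤ s → s ≤ t → Set.Ioo s t ⊆ U → m s + (t - s) ≤ m t := by
      intro s t has hst hIoo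
      have hdisj : Disjoint (U ∩ Set.Ioo a s) (Set.Ioo s t) := by
        rw [Set.disjoint_left]
        rintro x ⟨_, _, hxs⟩ ⟨hsx, _⟩
        exact absurd hsx (not_lt.2 hxs.le)
      have hsub : (U ∩ Set.Ioo a s) ∪ Set.Ioo s t ⊆ U ∩ Set.Ioo a t := by
        rintro x (⟨hxU, hxa, hxs⟩ | hx)
        · exact ⟨hxU, hxa, lt_of_lt_of_le hxs hst⟩
        · exact ⟨hIoo hx, lt_of_le_of_lt has hx.1, hx.2⟩
      have h1 : volume (U ∩ Set.Ioo a s) + ENNReal.ofReal (t - s) ≤ volume (U ∩ Set.Ioo a t) := by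
        rw [← Real.volume_Ioo, ← measure_union hdisj measurableSet_Ioo]
        exact measure_mono hsub
      have h2 := ENNReal.toReal_le_toReal
        (by simp [ENNReal.add_ne_top, hfin s]) (hfin t) |>.2 h1
      rw [ENNReal.toReal_add (hfin s) (by simp), ENNReal.toReal_ofReal (by linarith)] at h2
      exact h2
    have hm_cont : Continuous m := by
      have : LipschitzWith 1 m := by
        apply LipschitzWith.of_dist_le_mul
        intro x y
        rw [Real.dist_eq, Real.dist_eq, NNReal.coe_one, one_mul]
        rcases le_total x y with h | h
        · rw [abs_of_nonpos (by linarith [hm_mono x y h] : m x - m y ≤ 0),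
            abs_of_nonpos (by linarith)]
          linarith [hm_lip x y h]
        · rw [abs_of_nonneg (by linarith [hm_mono y x h] : 0 ≤ m x - m y),
            abs_of_nonneg (by linarith)]
          linarith [hm_lip y x h]
      exact this.continuous
    -- continuity of f on [a,b]
    have hfc : ContinuousOn f (Set.Icc a b) := by
      have : LipschitzOnWith C.toNNReal f (Set.Icc a b) := by
        rw [lipschitzOnWith_iff_dist_le_mul]
        intro x hx y hy
        rw [Real.dist_eq, Real.dist_eq, Real.coe_toNNReal C hC]
        exact hlip y hy x hx
      exact this.continuousOn
    -- the good set
    set P : Set ℝ := {t | f t ≤ f a + (C + 1) * m t + ε * (t - a)} with hPdef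
    have hclosed : IsClosed (P ∩ Set.Icc a b) := by
      have hg : ContinuousOn (fun t => f t - ((C + 1) * m t + ε * (t - a))) (Set.Icc a b) := by
        apply hfc.sub
        exact (((hm_cont.const_smul (C+1)).add
          ((continuous_id.sub continuous_const).const_smul ε)).continuousOn)
      have hkey := hg.preimage_isClosed_of_isClosed isClosed_Icc (isClosed_Iic (a := f a))
      have : P ∩ Set.Icc a b =
          Set.Icc a b ∩ (fun t => f t - ((C + 1) * m t + ε * (t - a))) ⁻¹' Set.Iic (f a) := by
        ext t
        simp only [Set.mem_inter_iff, Set.mem_preimage, Set.mem_Iic, hPdef, Set.mem_setOf_eq]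
        constructor
        · rintro ⟨h1, h2⟩; exact ⟨h2, by linarith⟩
        · rintro ⟨h1, h2⟩; exact ⟨by linarith, h1⟩
      rw [this]
      exact hkey
    have haP : a ∈ P := by
      have := hm_nonneg a
      simp only [hPdef, Set.mem_setOf_eq]
      nlinarith
    have hgt : ∀ x ∈ P ∩ Set.Ico a b, ∀ y ∈ Set.Ioi x, (P ∩ Set.Ioc x y).Nonempty := by
      rintro t ⟨htP, hta, htb⟩ y hy
      rw [Set.mem_Ioi] at hy
      by_cases htU : t ∈ U
      · -- inside the open set: use Lipschitz bound and measure growth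
        obtain ⟨δ, hδ, hball⟩ := Metric.isOpen_iff.1 hUopen t htU
        set u := min (min y (t + δ/2)) b with hudef
        have htu : t < u := lt_min (lt_min hy (by linarith)) htb
        have huy : u ≤ y := (min_le_left _ _).trans (min_le_left _ _)
        have hub : u ≤ b := min_le_right _ _
        have huδ : u ≤ t + δ/2 := (min_le_left _ _).trans (min_le_right _ _)
        have hIoo : Set.Ioo t u ⊆ U := by
          intro z hz
          apply hball
          rw [Metric.mem_ball, Real.dist_eq, abs_of_pos (sub_pos.2 hz.1)]
          have : z < t + δ/2 := lt_of_lt_of_le hz.2 huδ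
          linarith
        have hgrow := hm_grow t u hta htu.le hIoo
        have hau : a ≤ u := le_trans hta htu.le
        have hfu : f u - f t ≤ C * (u - t) := by
          have h1 := hlip t ⟨hta, htb.le⟩ u ⟨hau, hub⟩
          have h2 : |u - t| = u - t := abs_of_pos (sub_pos.2 htu)
          rw [h2] at h1
          exact le_trans (le_abs_self _) h1
        refine ⟨u, ?_, htu, huy⟩
        simp only [hPdef, Set.mem_setOf_eq] at htP ⊢
        have e1 : (C + 1) * (m t + (u - t)) ≤ (C + 1) * m u :=
          mul_le_mul_of_nonneg_left hgrow (by linarith)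
        have e2 : ε * (t - a) ≤ ε * (u - a) :=
          mul_le_mul_of_nonneg_left (by linarith) hε.le
        nlinarith
      · -- outside: derivative exists and is ≤ 0
        have htnB : t ∉ B ∪ {a} := fun h => htU (hBU h)
        have htna : t ≠ a := by
          intro h; exact htnB (Or.inr (by simp [h]))
        have hta' : a < t := lt_of_le_of_ne hta (Ne.symm htna)
        have htB : t ∉ B := fun h => htnB (Or.inl h)
        have htB' : ¬¬(t ∈ Set.Ioo a b → ∃ d ≤ (0:ℝ), HasDerivAt f d t) := htB
        obtain ⟨d, hd0, hder⟩ := (not_not.1 htB') ⟨hta', htb⟩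
        have hslope := hasDerivAt_iff_tendsto_slope.1 hder
        have hmono : 𝓝[>] t ≤ 𝓝[≠] t :=
          nhdsWithin_mono t (fun z hz => ne_of_gt hz)
        have ev1 : ∀ᶠ u in 𝓝[>] t, slope f t u < ε :=
          (hslope.mono_left hmono).eventually_lt_const (by linarith)
        have ev2 : Set.Ioc t (min y b) ∈ 𝓝[>] t :=
          Ioc_mem_nhdsGT_of_mem ⟨le_rfl, lt_min hy htb⟩
        obtain ⟨u, hu1, hu2⟩ := (ev1.and (eventually_of_mem ev2 (fun z hz => hz))).exists
        have htu : t < u := hu2.1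
        have hfu : f u - f t ≤ ε * (u - t) := by
          have : slope f t u = (f u - f t) / (u - t) := by
            rw [slope_def_field]
          rw [this] at hu1
          have := (div_lt_iff₀ (sub_pos.2 htu)).1 hu1
          linarith
        refine ⟨u, ?_, htu, hu2.2.trans (min_le_left _ _)⟩
        simp only [hPdef, Set.mem_setOf_eq] at htP ⊢
        have e1 : (C + 1) * m t ≤ (C + 1) * m u :=
          mul_le_mul_of_nonneg_left (hm_mono t u htu.le) (by linarith)
        nlinarith
    have hbP : b ∈ P := hclosed.Icc_subset_of_forall_exists_gt haP hgt ⟨hab, le_rfl⟩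
    simp only [hPdef, Set.mem_setOf_eq] at hbP
    have hmb : m b ≤ ε / (C + 1) := by
      have h1 : m b ≤ (volume U).toReal :=
        ENNReal.toReal_le_toReal (hfin b) hUfin |>.2 (measure_mono Set.inter_subset_left)
      have h2 : (volume U).toReal ≤ ε / (C + 1) :=
        ENNReal.toReal_le_of_le_ofReal hεC.le hUvol.le
      linarith
    have e1 : (C + 1) * m b ≤ (C + 1) * (ε / (C + 1)) :=
      mul_le_mul_of_nonneg_left hmb (by linarith)
    have e2 : (C + 1) * (ε / (C + 1)) = ε := mul_div_cancel₀ _ (by linarith)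
    nlinarith
  refine le_of_forall_pos_le_add ?_
  intro ε hε
  have h1 : 0 < 1 + (b - a) := by linarith
  have := main (ε / (1 + (b - a))) (by positivity)
  calc f b ≤ f a + ε / (1 + (b - a)) * (1 + (b - a)) := this
    _ = f a + ε := by rw [div_mul_cancel₀ _ (ne_of_gt h1)]


/-- Weak stability of the fluid model under a maximum pressure policy
(used in the proof of Theorem 1): if `Z̄(0) = 0` then `Z̄(t) = 0` and
`T̄(t) = x* t` for all `t ≥ 0`. -/
theorem fluid_weak_stability {I J K : Type*} [Fintype I] [Fintype J] [Fintype K] [DecidableEq J] [DecidableEq K]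
    (R : I → J → ℝ) (A : K → J → ℝ) (JI : Finset J) (KI : Finset K)
    (hND : NetData A JI KI)
    (α : I → ℝ) (hα : ∀ i, 0 < α i)
    (xstar : J → ℝ) (hSPP : SPPuniqueOpt R A KI 1 xstar)
    (Z : ℝ → I → ℝ) (T : ℝ → J → ℝ) (hfluid : FluidSol R A KI α Z T)
    (hZ0 : ∀ i, Z 0 i = 0) :
    (∀ t, 0 ≤ t → ∀ i, Z t i = 0) ∧
    ∀ t, 0 ≤ t → ∀ j, T t j = xstar j * t := by
  obtain ⟨hA01, hAio, hAact⟩ := hND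
  obtain ⟨hZdef, hZpos, hTin, hTall, hTmono, hT0, hMP⟩ := hfluid
  obtain ⟨⟨⟨hRx, hxin, hxsv, hxpos⟩, hmin⟩, huniq⟩ := hSPP
  have hAnn : ∀ k j, 0 ≤ A k j := by
    intro k j; rcases hA01 k j with h | h <;> rw [h] <;> norm_num
  -- T is 1-Lipschitz in each coordinate
  have hTle : ∀ s t : ℝ, 0 ≤ s → s ≤ t → ∀ j, T t j - T s j ≤ t - s := by
    intro s t hs hst j
    obtain ⟨k, hk⟩ := hAact j
    have hsum := hTall s t hs hst k
    have h1 : A k j * (T t j - T s j) ≤ ∑ j', A k j' * (T t j' - T s j') :=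
      Finset.single_le_sum (f := fun j' => A k j' * (T t j' - T s j'))
        (fun j' _ => mul_nonneg (hAnn k j') (sub_nonneg.2 (hTmono s t hs hst j')))
        (Finset.mem_univ j)
    rw [hk, one_mul] at h1
    linarith
  have hTnn : ∀ t : ℝ, 0 ≤ t → ∀ j, 0 ≤ T t j := by
    intro t ht j
    have := hTmono 0 t le_rfl ht j
    rwa [hT0 j] at this
  have hTub : ∀ t : ℝ, 0 ≤ t → ∀ j, T t j ≤ t := by
    intro t ht j
    have := hTle 0 t le_rfl ht j
    rw [hT0 j] at this; linarith
  -- x* belongs to the allocation set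
  have hxalloc : xstar ∈ Alloc A KI := by
    refine ⟨hxpos, fun k => ?_, hxin⟩
    by_cases hk : k ∈ KI
    · exact (hxin k hk).le
    · exact hxsv k hk
  -- allocations have coordinates in [0,1]
  have halloc_le1 : ∀ a ∈ Alloc A KI, ∀ j, a j ≤ 1 := by
    rintro a ⟨hann, hale, _⟩ j
    obtain ⟨k, hk⟩ := hAact j
    have h1 : A k j * a j ≤ ∑ j', A k j' * a j' :=
      Finset.single_le_sum (f := fun j' => A k j' * a j')
        (fun j' _ => mul_nonneg (hAnn k j') (hann j')) (Finset.mem_univ j)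
    rw [hk, one_mul] at h1
    exact h1.trans (hale k)
  -- the max pressure is nonnegative
  have hsSup : ∀ t : ℝ,
      0 ≤ sSup ((fun a => ∑ i, α i * Z t i * ∑ j, R i j * a j) '' Alloc A KI) := by
    intro t
    have hbdd : BddAbove ((fun a => ∑ i, α i * Z t i * ∑ j, R i j * a j) '' Alloc A KI) := by
      refine ⟨∑ i, |α i * Z t i| * ∑ j, |R i j|, ?_⟩
      rintro v ⟨a, ha, rfl⟩
      apply Finset.sum_le_sum
      intro i _
      calc α i * Z t i * ∑ j, R i j * a j ≤ |α i * Z t i * ∑ j, R i j * a j| := le_abs_self _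
        _ = |α i * Z t i| * |∑ j, R i j * a j| := abs_mul _ _
        _ ≤ |α i * Z t i| * ∑ j, |R i j| := by
            apply mul_le_mul_of_nonneg_left _ (abs_nonneg _)
            calc |∑ j, R i j * a j| ≤ ∑ j, |R i j * a j| := Finset.abs_sum_le_sum_abs _ _
              _ ≤ ∑ j, |R i j| := by
                  apply Finset.sum_le_sum
                  intro j _
                  rw [abs_mul]
                  have h1 : |a j| ≤ 1 := by
                    rw [abs_of_nonneg (ha.1 j)]; exact halloc_le1 a ha j
                  nlinarith [abs_nonneg (R i j)]
    have hval : ∑ i, α i * Z t i * ∑ j, R i j * xstar j = 0 :=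
      Finset.sum_eq_zero fun i _ => by rw [hRx i, mul_zero]
    exact hval ▸ le_csSup hbdd ⟨xstar, hxalloc, rfl⟩
  -- Lipschitz extension of T and a.e. differentiability
  have hTlip : ∀ j, LipschitzOnWith 1 (fun t => T t j) (Set.Ici 0) := by
    intro j
    rw [lipschitzOnWith_iff_dist_le_mul]
    intro x hx y hy
    rw [Real.dist_eq, Real.dist_eq, NNReal.coe_one, one_mul]
    rcases le_total x y with h | h
    · rw [abs_of_nonpos (sub_nonpos.2 (hTmono x y hx h j)), abs_of_nonpos (by linarith)]
      have := hTle x y hx h j; linarith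
    · rw [abs_of_nonneg (sub_nonneg.2 (hTmono y x hy h j)), abs_of_nonneg (by linarith)]
      have := hTle y x hy h j; linarith
  have hext : ∀ j, ∃ gg : ℝ → ℝ, LipschitzWith 1 gg ∧ Set.EqOn (fun t => T t j) gg (Set.Ici 0) :=
    fun j => (hTlip j).extend_real
  choose g hg1 hg2 using hext
  have hae_diff : ∀ᵐ t : ℝ, ∀ j, DifferentiableAt ℝ (g j) t :=
    (MeasureTheory.ae_all_iff).2 fun j => (hg1 j).ae_differentiableAt_of_real
  -- Lyapunov function
  set f : ℝ → ℝ := fun t => ∑ i, α i * (Z t i * Z t i) with hfdef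
  have haeD : ∀ᵐ t : ℝ, 0 < t → ∃ d ≤ (0:ℝ), HasDerivAt f d t := by
    filter_upwards [hae_diff] with t hdiff ht
    set T' : J → ℝ := fun j => deriv (g j) t with hT'def
    have hnhds : Set.Ioi (0:ℝ) ∈ 𝓝 t := isOpen_Ioi.mem_nhds ht
    have hTd : ∀ j, HasDerivAt (fun s => T s j) (T' j) t := by
      intro j
      have hev : (fun s => T s j) =ᶠ[𝓝 t] g j := by
        filter_upwards [hnhds] with s hs
        exact hg2 j (Set.mem_Ici.2 (le_of_lt hs))
      exact ((hdiff j).hasDerivAt).congr_of_eventuallyEq hev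
    have hZd : ∀ i, HasDerivAt (fun s => Z s i) (-∑ j, R i j * T' j) t := by
      intro i
      have hev : (fun s => Z s i) =ᶠ[𝓝 t] (fun s => Z 0 i - ∑ j, R i j * T s j) := by
        filter_upwards [hnhds] with s hs
        exact hZdef s (le_of_lt hs) i
      have hsum : HasDerivAt (fun s => ∑ j, R i j * T s j) (∑ j, R i j * T' j) t :=
        HasDerivAt.fun_sum fun j _ => (hTd j).const_mul (R i j)
      have hd : HasDerivAt (fun s => Z 0 i - ∑ j, R i j * T s j) (-∑ j, R i j * T' j) t := by
        simpa using hsum.const_sub (Z 0 i)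
      exact hd.congr_of_eventuallyEq hev
    have hEq := hMP t ht (fun i => -∑ j, R i j * T' j) T' hZd hTd
    refine ⟨∑ i, α i * ((-∑ j, R i j * T' j) * Z t i + Z t i * (-∑ j, R i j * T' j)), ?_, ?_⟩
    · have hd2 : ∑ i, α i * ((-∑ j, R i j * T' j) * Z t i + Z t i * (-∑ j, R i j * T' j))
          = -2 * ∑ i, α i * Z t i * ∑ j, R i j * T' j := by
        rw [Finset.mul_sum]
        exact Finset.sum_congr rfl fun i _ => by ring
      rw [hd2, hEq]
      linarith [hsSup t]
    · exact HasDerivAt.fun_sum fun i _ => ((hZd i).mul (hZd i)).const_mul (α i)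
  -- Z vanishes
  have hZzero : ∀ t : ℝ, 0 ≤ t → ∀ i, Z t i = 0 := by
    intro t ht
    set K : I → ℝ := fun i => ∑ j, |R i j| with hKdef
    have hKnn : ∀ i, 0 ≤ K i := fun i => Finset.sum_nonneg fun j _ => abs_nonneg _
    have hZb : ∀ v : ℝ, 0 ≤ v → ∀ i, |Z v i| ≤ K i * v := by
      intro v hv i
      rw [hZdef v hv i, hZ0 i, zero_sub, abs_neg]
      calc |∑ j, R i j * T v j| ≤ ∑ j, |R i j * T v j| := Finset.abs_sum_le_sum_abs _ _
        _ ≤ ∑ j, |R i j| * v := by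
            apply Finset.sum_le_sum
            intro j _
            rw [abs_mul, abs_of_nonneg (hTnn v hv j)]
            exact mul_le_mul_of_nonneg_left (hTub v hv j) (abs_nonneg _)
        _ = K i * v := by rw [hKdef, Finset.sum_mul]
    have hZinc : ∀ s v : ℝ, 0 ≤ s → s ≤ v → ∀ i, |Z v i - Z s i| ≤ K i * (v - s) := by
      intro s v hs hsv i
      have he : Z v i - Z s i = ∑ j, (R i j * T s j - R i j * T v j) := by
        rw [hZdef v (hs.trans hsv) i, hZdef s hs i, Finset.sum_sub_distrib]
        ring
      rw [he]
      calc |∑ j, (R i j * T s j - R i j * T v j)|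
          ≤ ∑ j, |R i j * T s j - R i j * T v j| := Finset.abs_sum_le_sum_abs _ _
        _ ≤ ∑ j, |R i j| * (v - s) := by
            apply Finset.sum_le_sum
            intro j _
            rw [← mul_sub, abs_mul]
            apply mul_le_mul_of_nonneg_left _ (abs_nonneg _)
            rw [abs_of_nonpos (by linarith [hTmono s v hs hsv j])]
            linarith [hTle s v hs hsv j]
        _ = K i * (v - s) := by rw [hKdef, Finset.sum_mul]
    set C : ℝ := ∑ i, α i * (2 * (K i * t)) * K i with hCdef
    have hlipf : ∀ s ∈ Set.Icc (0:ℝ) t, ∀ u ∈ Set.Icc (0:ℝ) t, |f u - f s| ≤ C * |u - s| := by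
      intro s hs u hu
      have h1 : f u - f s = ∑ i, α i * (Z u i * Z u i - Z s i * Z s i) := by
        rw [hfdef]
        simp only []
        rw [← Finset.sum_sub_distrib]
        exact Finset.sum_congr rfl fun i _ => by ring
      have key : ∀ i, |α i * (Z u i * Z u i - Z s i * Z s i)|
          ≤ (α i * (2 * (K i * t)) * K i) * |u - s| := by
        intro i
        have hZut : |Z u i| ≤ K i * t :=
          (hZb u hu.1 i).trans (mul_le_mul_of_nonneg_left hu.2 (hKnn i))
        have hZst : |Z s i| ≤ K i * t :=
          (hZb s hs.1 i).trans (mul_le_mul_of_nonneg_left hs.2 (hKnn i))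
        have hinc : |Z u i - Z s i| ≤ K i * |u - s| := by
          rcases le_total s u with h | h
          · have habs : |u - s| = u - s := abs_of_nonneg (by linarith)
            rw [habs]
            exact hZinc s u hs.1 h i
          · have habs : |u - s| = s - u := by
              rw [abs_sub_comm]; exact abs_of_nonneg (by linarith)
            rw [habs, abs_sub_comm]
            exact hZinc u s hu.1 h i
        have hfact : Z u i * Z u i - Z s i * Z s i = (Z u i + Z s i) * (Z u i - Z s i) := by
          ring
        rw [hfact, abs_mul, abs_mul]
        have hsumabs : |Z u i + Z s i| ≤ 2 * (K i * t) :=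
          (abs_add_le _ _).trans (by linarith)
        rw [abs_of_pos (hα i)]
        calc α i * (|Z u i + Z s i| * |Z u i - Z s i|)
            ≤ α i * ((2 * (K i * t)) * (K i * |u - s|)) := by
              apply mul_le_mul_of_nonneg_left _ (hα i).le
              apply mul_le_mul hsumabs hinc (abs_nonneg _) (by positivity)
          _ = (α i * (2 * (K i * t)) * K i) * |u - s| := by ring
      calc |f u - f s| = |∑ i, α i * (Z u i * Z u i - Z s i * Z s i)| := by rw [h1]
        _ ≤ ∑ i, |α i * (Z u i * Z u i - Z s i * Z s i)| := Finset.abs_sum_le_sum_abs _ _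
        _ ≤ ∑ i, (α i * (2 * (K i * t)) * K i) * |u - s| :=
            Finset.sum_le_sum fun i _ => key i
        _ = C * |u - s| := by rw [hCdef, ← Finset.sum_mul]
    have hft : f t ≤ f 0 := by
      apply aux_antitone f 0 t C ht hlipf
      filter_upwards [haeD] with v hv hmem
      exact hv hmem.1
    have hf0 : f 0 = 0 := by
      rw [hfdef]
      simp only []
      exact Finset.sum_eq_zero fun i _ => by rw [hZ0 i, mul_zero, mul_zero]
    have hterm : ∀ i, 0 ≤ α i * (Z t i * Z t i) :=
      fun i => mul_nonneg (hα i).le (mul_self_nonneg _)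
    have hsum0 : ∑ i, α i * (Z t i * Z t i) = 0 := by
      apply le_antisymm
      · rw [← hf0]; exact hft
      · exact Finset.sum_nonneg fun i _ => hterm i
    intro i
    have h := (Finset.sum_eq_zero_iff_of_nonneg fun i _ => hterm i).1 hsum0 i (Finset.mem_univ i)
    rcases mul_eq_zero.1 h with h' | h'
    · exact absurd h' (ne_of_gt (hα i))
    · exact mul_self_eq_zero.1 h'
  refine ⟨hZzero, ?_⟩
  intro t ht j
  rcases eq_or_lt_of_le ht with rfl | ht'
  · rw [hT0 j, mul_zero]
  · have htne : t ≠ 0 := ne_of_gt ht'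
    have hsum_eq : ∀ i, ∑ j, R i j * T t j = 0 := by
      intro i
      have h := hZdef t ht i
      rw [hZzero t ht i, hZ0 i] at h
      linarith
    set x : J → ℝ := fun j => T t j / t with hxdef
    have hfeas : SPPfeas R A KI 1 x := by
      refine ⟨?_, ?_, ?_, ?_⟩
      · intro i
        have hdiv : ∑ j, R i j * (T t j / t) = (∑ j, R i j * T t j) / t := by
          rw [Finset.sum_div]
          exact Finset.sum_congr rfl fun j _ => by ring
        show ∑ j, R i j * (T t j / t) = 0
        rw [hdiv, hsum_eq i, zero_div]
      · intro k hk
        have h := hTin 0 t le_rfl ht k hk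
        simp only [hT0, sub_zero] at h
        have hdiv : ∑ j, A k j * (T t j / t) = (∑ j, A k j * T t j) / t := by
          rw [Finset.sum_div]
          exact Finset.sum_congr rfl fun j _ => by ring
        show ∑ j, A k j * (T t j / t) = 1
        rw [hdiv, h, div_self htne]
      · intro k _
        have h := hTall 0 t le_rfl ht k
        simp only [hT0, sub_zero] at h
        have hdiv : ∑ j, A k j * (T t j / t) = (∑ j, A k j * T t j) / t := by
          rw [Finset.sum_div]
          exact Finset.sum_congr rfl fun j _ => by ring
        show ∑ j, A k j * (T t j / t) ≤ 1
        rw [hdiv]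
        rw [div_le_one ht']
        linarith
      · intro j
        exact div_nonneg (hTnn t ht j) ht
    obtain ⟨-, hx⟩ := huniq 1 x ⟨hfeas, hmin⟩
    have hxj : T t j / t = xstar j := by rw [← hx]
    rw [← hxj, div_mul_cancel₀ _ htne]
end

section
/- Let (R, A) be network data with nonempty allocation set 𝒜. Then for every y ∈ ℝ^ℐ: max_{a∈𝒜} Σ_{i∈ℐ} Σ_{j∈𝒥} y_i R_{ij} a_j = max_{a∈𝒜} Σ_{i∈ℐ} Σ_{j∈𝒥_I} y_i R_{ij} a_j + max_{a∈𝒜} Σ_{i∈ℐ} Σ_{j∈𝒥_S} y_i R_{ij} a_j. -/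
open Finset

/-- Decomposition of the maximal workload rate over the allocation set into its
input-activity part and its service-activity part. -/
theorem max_rate_decomposition {I J K : Type*} [Fintype I] [Fintype J] [Fintype K] [DecidableEq J] [DecidableEq K]
    (R : I → J → ℝ) (A : K → J → ℝ) (JI : Finset J) (KI : Finset K)
    (hND : NetData A JI KI)
    (hA : (Alloc A KI).Nonempty) (y : I → ℝ) :
    sSup ((fun a => ∑ i, ∑ j, y i * R i j * a j) '' Alloc A KI) =
      sSup ((fun a => ∑ i, ∑ j ∈ JI, y i * R i j * a j) '' Alloc A KI) +
        sSup ((fun a => ∑ i, ∑ j ∈ JIᶜ, y i * R i j * a j) '' Alloc A KI) := by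
  obtain ⟨hA01, hAz, hAone⟩ := hND
  have hAnn : ∀ k j, 0 ≤ A k j := fun k j => by rcases hA01 k j with h|h <;> simp [h]
  -- allocations are in [0,1]
  have hbound : ∀ a ∈ Alloc A KI, ∀ j, 0 ≤ a j ∧ a j ≤ 1 := by
    rintro a ⟨ha0, ha1, -⟩ j
    refine ⟨ha0 j, ?_⟩
    obtain ⟨k, hk⟩ := hAone j
    calc a j = A k j * a j := by rw [hk, one_mul]
      _ ≤ ∑ j', A k j' * a j' :=
          Finset.single_le_sum (fun j' _ => mul_nonneg (hAnn k j') (ha0 j')) (Finset.mem_univ j)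
      _ ≤ 1 := ha1 k
  set M : ℝ := ∑ i, ∑ j, |y i * R i j| with hM
  have hMb : ∀ s : Finset J, ∀ a ∈ Alloc A KI,
      (∑ i, ∑ j ∈ s, y i * R i j * a j) ≤ M := by
    intro s a ha
    refine Finset.sum_le_sum fun i _ => ?_
    refine le_trans (Finset.sum_le_sum fun j _ => ?_)
      (Finset.sum_le_sum_of_subset_of_nonneg (Finset.subset_univ s)
        (fun j _ _ => abs_nonneg _))
    calc y i * R i j * a j ≤ |y i * R i j| * a j :=
          mul_le_mul_of_nonneg_right (le_abs_self _) (hbound a ha j).1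
      _ ≤ |y i * R i j| := mul_le_of_le_one_right (abs_nonneg _) (hbound a ha j).2
  -- combination of two allocations
  have hcomb : ∀ a ∈ Alloc A KI, ∀ b ∈ Alloc A KI,
      (fun j => if j ∈ JI then a j else b j) ∈ Alloc A KI := by
    rintro a ⟨ha0, ha1, ha2⟩ b ⟨hb0, hb1, hb2⟩
    set c : J → ℝ := fun j => if j ∈ JI then a j else b j with hc
    have hkeyI : ∀ k ∈ KI, ∑ j, A k j * c j = ∑ j, A k j * a j := by
      intro k hk
      refine Finset.sum_congr rfl fun j _ => ?_
      by_cases hj : j ∈ JI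
      · simp [c, hj]
      · rw [hAz k j (Or.inl ⟨hk, hj⟩)]; ring
    have hkeyS : ∀ k, k ∉ KI → ∑ j, A k j * c j = ∑ j, A k j * b j := by
      intro k hk
      refine Finset.sum_congr rfl fun j _ => ?_
      by_cases hj : j ∈ JI
      · rw [hAz k j (Or.inr ⟨hk, hj⟩)]; ring
      · simp [c, hj]
    refine ⟨fun j => ?_, fun k => ?_, fun k hk => ?_⟩
    · by_cases hj : j ∈ JI <;> simp [c, hj, ha0 j, hb0 j]
    · by_cases hk : k ∈ KI
      · rw [hkeyI k hk]; exact ha1 k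
      · rw [hkeyS k hk]; exact hb1 k
    · rw [hkeyI k hk]; exact ha2 k hk
  -- notation
  set fI : (J → ℝ) → ℝ := fun a => ∑ i, ∑ j ∈ JI, y i * R i j * a j with hfI
  set fS : (J → ℝ) → ℝ := fun a => ∑ i, ∑ j ∈ JIᶜ, y i * R i j * a j with hfS
  have hsplit : ∀ a : J → ℝ, (∑ i, ∑ j, y i * R i j * a j) = fI a + fS a := by
    intro a
    rw [hfI, hfS, ← Finset.sum_add_distrib]
    exact Finset.sum_congr rfl fun i _ => (Finset.sum_add_sum_compl JI _).symm
  have hne1 : ((fun a => ∑ i, ∑ j, y i * R i j * a j) '' Alloc A KI).Nonempty := hA.image _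
  have hneI : (fI '' Alloc A KI).Nonempty := hA.image _
  have hneS : (fS '' Alloc A KI).Nonempty := hA.image _
  have hbd1 : BddAbove ((fun a => ∑ i, ∑ j, y i * R i j * a j) '' Alloc A KI) := by
    refine ⟨M, ?_⟩
    rintro x ⟨a, ha, rfl⟩
    exact hMb Finset.univ a ha
  have hbdI : BddAbove (fI '' Alloc A KI) := by
    refine ⟨M, ?_⟩
    rintro x ⟨a, ha, rfl⟩
    exact hMb JI a ha
  have hbdS : BddAbove (fS '' Alloc A KI) := by
    refine ⟨M, ?_⟩
    rintro x ⟨a, ha, rfl⟩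
    exact hMb JIᶜ a ha
  have key : ∀ a ∈ Alloc A KI, ∀ b ∈ Alloc A KI,
      fI a + fS b ≤ sSup ((fun a => ∑ i, ∑ j, y i * R i j * a j) '' Alloc A KI) := by
    intro a ha b hb
    set c : J → ℝ := fun j => if j ∈ JI then a j else b j with hc
    have hcA : c ∈ Alloc A KI := hcomb a ha b hb
    have hfIc : fI c = fI a := by
      refine Finset.sum_congr rfl fun i _ => Finset.sum_congr rfl fun j hj => ?_
      simp [c, hj]
    have hfSc : fS c = fS b := by
      refine Finset.sum_congr rfl fun i _ => Finset.sum_congr rfl fun j hj => ?_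
      simp [c, Finset.mem_compl.mp hj]
    calc fI a + fS b = fI c + fS c := by rw [hfIc, hfSc]
      _ = ∑ i, ∑ j, y i * R i j * c j := (hsplit c).symm
      _ ≤ _ := le_csSup hbd1 ⟨c, hcA, rfl⟩
  apply le_antisymm
  · refine csSup_le hne1 ?_
    rintro x ⟨a, ha, rfl⟩
    exact le_of_eq_of_le (hsplit a)
      (add_le_add (le_csSup hbdI ⟨a, ha, rfl⟩) (le_csSup hbdS ⟨a, ha, rfl⟩))
  · have h1 : sSup (fI '' Alloc A KI) ≤
        sSup ((fun a => ∑ i, ∑ j, y i * R i j * a j) '' Alloc A KI) -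
          sSup (fS '' Alloc A KI) := by
      refine csSup_le hneI ?_
      rintro w ⟨a, ha, rfl⟩
      rw [le_sub_iff_add_le, add_comm, ← le_sub_iff_add_le]
      refine csSup_le hneS ?_
      rintro x ⟨b, hb, rfl⟩
      rw [le_sub_iff_add_le, add_comm]
      exact key a ha b hb
    linarith
end

section
/- Let (R, A) be network data such that the static planning problem has optimal objective value 1 and the dual problem has a unique optimal solution (y*, z*). Then max_{a∈𝒜} Σ_{i∈ℐ} Σ_{j∈𝒥} y*_i R_{ij} a_j = 0; that is, no allocation achieves a positive workload depletion rate. -/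
set_option linter.unusedSectionVars false
set_option maxHeartbeats 1000000


open Finset

namespace FarkasDev

variable {n : Type*} [Fintype n]

/-- dot product -/
def dp (p v : n → ℝ) : ℝ := ∑ i, p i * v i

lemma dp_add_smul (p x y : n → ℝ) (c : ℝ) : dp p (x + c • y) = dp p x + c * dp p y := by
  simp only [dp, Pi.add_apply, Pi.smul_apply, smul_eq_mul, mul_add, Finset.sum_add_distrib,
    Finset.mul_sum]
  congr 1
  exact Finset.sum_congr rfl fun i _ => by ring

lemma dp_sub_smul (p x y : n → ℝ) (c : ℝ) : dp p (x - c • y) = dp p x - c * dp p y := by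
  simp only [dp, Pi.sub_apply, Pi.smul_apply, smul_eq_mul, mul_sub, Finset.sum_sub_distrib,
    Finset.mul_sum]
  congr 1
  exact Finset.sum_congr rfl fun i _ => by ring

lemma dp_sub_smul_left (q p w : n → ℝ) (c : ℝ) : dp (q - c • p) w = dp q w - c * dp p w := by
  simp only [dp, Pi.sub_apply, Pi.smul_apply, smul_eq_mul, sub_mul, Finset.sum_sub_distrib,
    Finset.mul_sum]
  congr 1
  exact Finset.sum_congr rfl fun i _ => by ring

/-- membership in the cone generated by a list of vectors -/
def InCone : List (n → ℝ) → (n → ℝ) → Prop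
  | [], b => b = 0
  | v :: l, b => ∃ t : ℝ, 0 ≤ t ∧ InCone l (b - t • v)

lemma incone_map_smul (v : n → ℝ) (g : (n → ℝ) → ℝ) :
    ∀ (l : List (n → ℝ)) (x : n → ℝ), (∀ w ∈ l, 0 ≤ g w) →
    InCone (l.map (fun w => w + g w • v)) x → ∃ μ : ℝ, 0 ≤ μ ∧ InCone l (x - μ • v) := by
  intro l
  induction l with
  | nil =>
      intro x _ hx
      exact ⟨0, le_refl 0, by simpa [InCone] using hx⟩
  | cons w t ih =>
      intro x hg hx
      obtain ⟨s, hs, hrest⟩ := hx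
      obtain ⟨μ', hμ', ht⟩ := ih _ (fun u hu => hg u (List.mem_cons_of_mem _ hu)) hrest
      refine ⟨μ' + s * g w,
        add_nonneg hμ' (mul_nonneg hs (hg w List.mem_cons_self)), s, hs, ?_⟩
      convert ht using 1
      module


theorem farkas_aux (m : ℕ) : ∀ (l : List (n → ℝ)), l.length ≤ m → ∀ b : n → ℝ,
    InCone l b ∨ ∃ p : n → ℝ, (∀ v ∈ l, 0 ≤ dp p v) ∧ dp p b < 0 := by
  induction m with
  | zero =>
      intro l hl b
      rw [Nat.le_zero, List.length_eq_zero_iff] at hl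
      subst hl
      by_cases hb : b = 0
      · exact Or.inl hb
      · refine Or.inr ⟨-b, by simp, ?_⟩
        have : 0 < dp b b := by
          have h1 : 0 ≤ dp b b := Finset.sum_nonneg fun i _ => mul_self_nonneg _
          rcases h1.lt_or_eq with h | h
          · exact h
          · exfalso
            apply hb
            funext i
            have := (Finset.sum_eq_zero_iff_of_nonneg
              (fun i _ => mul_self_nonneg (b i))).mp h.symm i (Finset.mem_univ i)
            exact mul_self_eq_zero.mp this
        have : dp (-b) b = -dp b b := by
          simp [dp, Finset.sum_neg_distrib]
        simpa [this] using neg_neg_iff_pos.mpr ‹0 < dp b b›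
  | succ m ih =>
      intro l hl b
      match l with
      | [] => exact ih [] (Nat.zero_le _) b
      | v :: l =>
        have hlm : l.length ≤ m := by simpa using hl
        rcases ih l hlm b with hin | ⟨p, hp, hpb⟩
        · exact Or.inl ⟨0, le_refl 0, by simpa using hin⟩
        by_cases hpv : 0 ≤ dp p v
        · refine Or.inr ⟨p, ?_, hpb⟩
          intro w hw
          rcases List.mem_cons.mp hw with rfl | hw
          · exact hpv
          · exact hp w hw
        push_neg at hpv
        have hα : dp p v ≠ 0 := ne_of_lt hpv
        set α := dp p v with hαdef
        -- transformed list and target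
        set g : (n → ℝ) → ℝ := fun w => -(dp p w / α) with hg
        have hgl : ∀ w ∈ l, 0 ≤ g w := by
          intro w hw
          have := hp w hw
          have : dp p w / α ≤ 0 := div_nonpos_of_nonneg_of_nonpos this (le_of_lt hpv)
          simpa [hg] using neg_nonneg.mpr this
        set b' : n → ℝ := b + g b • v with hb'
        rcases ih (l.map (fun w => w + g w • v)) (by simpa using hlm) b' with hin' | ⟨q, hq, hqb⟩
        · -- b' in transformed cone ⇒ b in cone of v :: l
          obtain ⟨μ, hμ, hmem⟩ := incone_map_smul v g l b' hgl hin'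
          refine Or.inl ⟨dp p b / α + μ, ?_, ?_⟩
          · have h1 : 0 < dp p b / α := div_pos_of_neg_of_neg hpb hpv
            linarith
          · convert hmem using 1
            simp only [hb', hg]
            module
        · -- certificate q ⇒ certificate r for v :: l
          set r : n → ℝ := q - (dp q v / α) • p with hr
          refine Or.inr ⟨r, ?_, ?_⟩
          · intro w hw
            rcases List.mem_cons.mp hw with rfl | hw
            · have : dp r w = dp q w - (dp q w / α) * dp p w := by
                rw [hr, dp_sub_smul_left]
              rw [this, ← hαdef]
              field_simp
              simp
            · have h1 : 0 ≤ dp q (w + g w • v) :=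
                hq _ (List.mem_map.mpr ⟨w, hw, rfl⟩)
              have h2 : dp q (w + g w • v) = dp q w + g w * dp q v := dp_add_smul _ _ _ _
              have h3 : dp r w = dp q w - (dp q v / α) * dp p w := dp_sub_smul_left _ _ _ _
              rw [h3]
              rw [h2, hg] at h1
              simp only at h1
              have e : -(dp p w / α) * dp q v = -(dp q v / α * dp p w) := by ring
              linarith [h1, e.symm.le]
          · have h2 : dp q b' = dp q b + g b * dp q v := dp_add_smul _ _ _ _
            have h3 : dp r b = dp q b - (dp q v / α) * dp p b := dp_sub_smul_left _ _ _ _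
            rw [h3]
            rw [h2, hg] at hqb
            simp only at hqb
            have e : -(dp p b / α) * dp q v = -(dp q v / α * dp p b) := by ring
            linarith [hqb, e.le]

theorem farkas (l : List (n → ℝ)) (b : n → ℝ) :
    InCone l b ∨ ∃ p : n → ℝ, (∀ v ∈ l, 0 ≤ dp p v) ∧ dp p b < 0 :=
  farkas_aux l.length l (le_refl _) b


lemma incone_of_coeffs {ι : Type*} (f : ι → n → ℝ) :
    ∀ (L : List ι) (c : ι → ℝ), (∀ i, 0 ≤ c i) →
      InCone (L.map f) ((L.map fun i => c i • f i).sum) := by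
  intro L
  induction L with
  | nil => intro c _; simp [InCone]
  | cons i t ih =>
      intro c hc
      refine ⟨c i, hc i, ?_⟩
      have := ih c hc
      simpa using this

lemma coeffs_of_incone {ι : Type*} [DecidableEq ι] (f : ι → n → ℝ) :
    ∀ (L : List ι), L.Nodup → ∀ b : n → ℝ, InCone (L.map f) b →
      ∃ c : ι → ℝ, (∀ i, 0 ≤ c i) ∧ b = (L.map fun i => c i • f i).sum := by
  intro L
  induction L with
  | nil =>
      intro _ b hb
      exact ⟨0, fun i => le_refl 0, by simpa [InCone] using hb⟩
  | cons i t ih =>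
      intro hnd b hb
      obtain ⟨s, hs, hrest⟩ := hb
      obtain ⟨c, hc, hcb⟩ := ih (List.nodup_cons.mp hnd).2 _ hrest
      refine ⟨Function.update c i s, ?_, ?_⟩
      · intro j
        rcases eq_or_ne j i with rfl | hji
        · simp [hs]
        · simp [Function.update_of_ne hji, hc j]
      · have hit : i ∉ t := (List.nodup_cons.mp hnd).1
        have hmap : (t.map fun j => Function.update c i s j • f j) =
            t.map fun j => c j • f j := by
          apply List.map_congr_left
          intro j hj
          have : j ≠ i := fun h => hit (h ▸ hj)
          rw [Function.update_of_ne this]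
        simp only [List.map_cons, List.sum_cons, hmap, Function.update_self]
        rw [← hcb]
        abel

lemma incone_univ_iff {ι : Type*} [Fintype ι] [DecidableEq ι] (f : ι → n → ℝ) (b : n → ℝ) :
    InCone ((Finset.univ.toList (α := ι)).map f) b ↔
      ∃ c : ι → ℝ, (∀ i, 0 ≤ c i) ∧ b = ∑ i, c i • f i := by
  constructor
  · intro h
    obtain ⟨c, hc, hb⟩ := coeffs_of_incone f _ (Finset.nodup_toList _) b h
    exact ⟨c, hc, by rw [hb, Finset.sum_map_toList]⟩
  · rintro ⟨c, hc, rfl⟩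
    rw [← Finset.sum_map_toList]
    exact incone_of_coeffs f _ c hc


theorem farkas_fintype {ι : Type*} [Fintype ι] [DecidableEq ι] (f : ι → n → ℝ) (b : n → ℝ) :
    (∃ c : ι → ℝ, (∀ i, 0 ≤ c i) ∧ b = ∑ i, c i • f i) ∨
      ∃ p : n → ℝ, (∀ i, 0 ≤ dp p (f i)) ∧ dp p b < 0 := by
  rcases farkas ((Finset.univ.toList (α := ι)).map f) b with h | ⟨p, hp, hpb⟩
  · exact Or.inl ((incone_univ_iff f b).mp h)
  · refine Or.inr ⟨p, fun i => hp (f i) ?_, hpb⟩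
    exact List.mem_map.mpr ⟨i, Finset.mem_toList.mpr (Finset.mem_univ i), rfl⟩


lemma swap_sum_mul {K J : Type*} [Fintype K] [Fintype J] (S : Finset J) (T : Finset K)
    (z : K → ℝ) (A : K → J → ℝ) (a : J → ℝ) :
    ∑ j ∈ S, (∑ k ∈ T, z k * A k j) * a j = ∑ k ∈ T, z k * ∑ j ∈ S, A k j * a j := by
  simp only [Finset.sum_mul]
  rw [Finset.sum_comm]
  refine Finset.sum_congr rfl fun k _ => ?_
  rw [Finset.mul_sum]
  exact Finset.sum_congr rfl fun j _ => by ring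

end FarkasDev


open FarkasDev in
/-- Equation (6.12): when the network is critically loaded (`ρ = 1`),
no allocation achieves a positive workload depletion rate, and the maximal
rate `max_{a ∈ 𝒜} y* ⬝ R a` equals `0`. -/
theorem no_positive_depletion {I J K : Type*} [Fintype I] [Fintype J] [Fintype K] [DecidableEq J] [DecidableEq K]
    (R : I → J → ℝ) (A : K → J → ℝ) (JI : Finset J) (KI : Finset K)
    (hND : NetData A JI KI)
    (hSPP : ∃ x, SPPopt R A KI 1 x)
    (ystar : I → ℝ) (zstar : K → ℝ) (hD : DuniqueOpt R A JI KI ystar zstar) :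
    IsGreatest ((fun a => ∑ i, ∑ j, ystar i * R i j * a j) '' Alloc A KI) 0 := by
  classical
  obtain ⟨x, hxf, hxopt⟩ := hSPP
  obtain ⟨⟨hDf, hDmax⟩, -⟩ := hD
  obtain ⟨hxR, hxKI, hxKS, hxpos⟩ := hxf
  obtain ⟨hND1, hND2, hND3⟩ := hND
  obtain ⟨hDf1, hDf2, hDf3, hDf4⟩ := hDf
  -- the SPP optimal solution is an allocation
  have hxA : x ∈ Alloc A KI := by
    refine ⟨hxpos, fun k => ?_, hxKI⟩
    by_cases hk : k ∈ KI
    · exact le_of_eq (hxKI k hk)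
    · exact hxKS k hk
  -- its value is 0
  have hx0 : ∑ i, ∑ j, ystar i * R i j * x j = 0 := by
    apply Finset.sum_eq_zero
    intro i _
    have h1 : ∑ j, ystar i * R i j * x j = ystar i * ∑ j, R i j * x j := by
      rw [Finset.mul_sum]
      exact Finset.sum_congr rfl fun j _ => by ring
    rw [h1, hxR i, mul_zero]
  set c := ∑ k ∈ KI, zstar k with hc
  -- dual optimal value is at least 1
  have hc1 : (1:ℝ) ≤ c := by
    by_contra hlt
    push_neg at hlt
    set ρ' : ℝ := (c + 1) / 2 with hρ'
    have hρc : c < ρ' := by rw [hρ']; linarith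
    have hρ1 : ρ' < 1 := by rw [hρ']; linarith
    -- set up the Farkas system
    set col : J ⊕ K → (I ⊕ K) → ℝ := Sum.elim
      (fun j => Sum.elim (fun i => R i j) (fun k => A k j))
      (fun k0 => if k0 ∈ KI then 0 else Sum.elim 0 (fun k => if k = k0 then 1 else 0))
      with hcol
    set bvec : (I ⊕ K) → ℝ := Sum.elim 0 (fun k => if k ∈ KI then 1 else ρ') with hbvec
    rcases FarkasDev.farkas_fintype col bvec with ⟨cc, hcc, hbeq⟩ | ⟨p, hp, hpb⟩
    · -- a feasible solution with ρ' < 1 : contradiction with SPP optimality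
      set x' : J → ℝ := fun j => cc (Sum.inl j) with hx'
      have hrow : ∀ w : I ⊕ K, bvec w = ∑ j, cc (Sum.inl j) * col (Sum.inl j) w
          + ∑ k, cc (Sum.inr k) * col (Sum.inr k) w := by
        intro w
        have h := congrFun hbeq w
        rw [Finset.sum_apply] at h
        simp only [Pi.smul_apply, smul_eq_mul] at h
        rw [h, Fintype.sum_sum_type]
      have hfeas : SPPfeas R A KI ρ' x' := by
        refine ⟨?_, ?_, ?_, fun j => hcc (Sum.inl j)⟩
        · intro i
          have h := hrow (Sum.inl i)
          have h2 : ∑ k, cc (Sum.inr k) * col (Sum.inr k) (Sum.inl i) = 0 := by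
            apply Finset.sum_eq_zero
            intro k _
            by_cases hk : k ∈ KI <;> simp [hcol, hk]
          rw [h2, add_zero] at h
          simp only [hbvec, Sum.elim_inl, Pi.zero_apply] at h
          calc ∑ j, R i j * x' j = ∑ j, cc (Sum.inl j) * col (Sum.inl j) (Sum.inl i) :=
                Finset.sum_congr rfl fun j _ => by simp [hcol, hx', mul_comm]
            _ = 0 := h.symm
        · intro k hk
          have h := hrow (Sum.inr k)
          have h2 : ∑ k0, cc (Sum.inr k0) * col (Sum.inr k0) (Sum.inr k) = 0 := by
            apply Finset.sum_eq_zero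
            intro k0 _
            by_cases hk0 : k0 ∈ KI
            · simp [hcol, hk0]
            · have hne : k ≠ k0 := fun h' => hk0 (h' ▸ hk)
              simp [hcol, hk0, hne]
          rw [h2, add_zero] at h
          simp only [hbvec, Sum.elim_inr, if_pos hk] at h
          calc ∑ j, A k j * x' j = ∑ j, cc (Sum.inl j) * col (Sum.inl j) (Sum.inr k) :=
                Finset.sum_congr rfl fun j _ => by simp [hcol, hx', mul_comm]
            _ = 1 := h.symm
        · intro k hk
          have h := hrow (Sum.inr k)
          have h2 : ∑ k0, cc (Sum.inr k0) * col (Sum.inr k0) (Sum.inr k) = cc (Sum.inr k) := by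
            rw [Finset.sum_eq_single k]
            · simp [hcol, hk]
            · intro k0 _ hne
              by_cases hk0 : k0 ∈ KI
              · simp [hcol, hk0]
              · simp [hcol, hk0, Ne.symm hne]
            · intro h'; exact absurd (Finset.mem_univ k) h'
          rw [h2] at h
          simp only [hbvec, Sum.elim_inr, if_neg hk] at h
          have h3 : ∑ j, A k j * x' j = ∑ j, cc (Sum.inl j) * col (Sum.inl j) (Sum.inr k) :=
            Finset.sum_congr rfl fun j _ => by simp [hcol, hx', mul_comm]
          have h4 := hcc (Sum.inr k)
          rw [h3]
          linarith [h.symm.le]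
      exact absurd (hxopt ρ' x' hfeas) (by linarith)
    · -- the Farkas certificate improves the dual solution : contradiction
      set q : K → ℝ := fun k => p (Sum.inr k) with hqdef
      set y' : I → ℝ := fun i => -p (Sum.inl i) with hy'
      have hdp : ∀ v : (I ⊕ K) → ℝ, FarkasDev.dp p v =
          ∑ i, p (Sum.inl i) * v (Sum.inl i) + ∑ k, p (Sum.inr k) * v (Sum.inr k) := by
        intro v; rw [FarkasDev.dp, Fintype.sum_sum_type]
      have hqpos : ∀ k ∉ KI, 0 ≤ q k := by
        intro k hk
        have h := hp (Sum.inr k)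
        rw [hdp] at h
        have h1 : ∑ i, p (Sum.inl i) * col (Sum.inr k) (Sum.inl i) = 0 :=
          Finset.sum_eq_zero fun i _ => by simp [hcol, hk]
        have h2 : ∑ k0, p (Sum.inr k0) * col (Sum.inr k) (Sum.inr k0) = q k := by
          rw [Finset.sum_eq_single k]
          · simp [hcol, hk, hqdef]
          · intro k0 _ hne
            simp [hcol, hk, hne]
          · intro h'; exact absurd (Finset.mem_univ k) h'
        rw [h1, h2, zero_add] at h
        exact h
      have hcons : ∀ j, ∑ i, y' i * R i j ≤ ∑ k, q k * A k j := by
        intro j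
        have h := hp (Sum.inl j)
        rw [hdp] at h
        have h1 : ∑ i, p (Sum.inl i) * col (Sum.inl j) (Sum.inl i)
            = ∑ i, p (Sum.inl i) * R i j := by simp [hcol]
        have h2 : ∑ k, p (Sum.inr k) * col (Sum.inl j) (Sum.inr k) = ∑ k, q k * A k j := by
          simp [hcol, hqdef]
        rw [h1, h2] at h
        have h3 : ∑ i, y' i * R i j = -∑ i, p (Sum.inl i) * R i j := by
          rw [← Finset.sum_neg_distrib]
          exact Finset.sum_congr rfl fun i _ => by rw [hy']; ring
        linarith [h, h3]
      have hobj : ∑ k ∈ KI, q k + ρ' * ∑ k ∈ KIᶜ, q k < 0 := by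
        have h := hpb
        rw [hdp] at h
        have h1 : ∑ i, p (Sum.inl i) * bvec (Sum.inl i) = 0 :=
          Finset.sum_eq_zero fun i _ => by simp [hbvec]
        have h2 : ∑ k, p (Sum.inr k) * bvec (Sum.inr k)
            = ∑ k ∈ KI, q k + ρ' * ∑ k ∈ KIᶜ, q k := by
          rw [← Finset.sum_add_sum_compl KI (fun k => p (Sum.inr k) * bvec (Sum.inr k))]
          congr 1
          · exact Finset.sum_congr rfl fun k hk => by simp [hbvec, hqdef, if_pos hk]
          · rw [Finset.mul_sum]
            refine Finset.sum_congr rfl fun k hk => ?_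
            have hk' : k ∉ KI := Finset.mem_compl.mp hk
            simp only [hbvec, Sum.elim_inr, if_neg hk', hqdef]
            ring
        rw [h1, h2, zero_add] at h
        exact h
      set σ : ℝ := ∑ k ∈ KIᶜ, q k with hσdef
      have hσ0 : 0 ≤ σ := Finset.sum_nonneg fun k hk => hqpos k (Finset.mem_compl.mp hk)
      set ζ : K → ℝ := fun k => if k ∈ KI then -q k else q k with hζdef
      have hζKI : ∑ k ∈ KI, ζ k = -∑ k ∈ KI, q k := by
        rw [← Finset.sum_neg_distrib]
        exact Finset.sum_congr rfl fun k hk => by simp [hζdef, hk]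
      have hζKIc : ∀ k ∉ KI, ζ k = q k := fun k hk => by simp [hζdef, hk]
      have hconsJI : ∀ j ∈ JI, ∑ i, y' i * R i j ≤ -∑ k ∈ KI, ζ k * A k j := by
        intro j hj
        have h := hcons j
        rw [← Finset.sum_add_sum_compl KI (fun k => q k * A k j)] at h
        have h2 : ∑ k ∈ KIᶜ, q k * A k j = 0 := Finset.sum_eq_zero fun k hk => by
          rw [hND2 k j (Or.inr ⟨Finset.mem_compl.mp hk, hj⟩), mul_zero]
        have h3 : -∑ k ∈ KI, ζ k * A k j = ∑ k ∈ KI, q k * A k j := by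
          rw [← Finset.sum_neg_distrib]
          exact Finset.sum_congr rfl fun k hk => by simp [hζdef, hk]
        rw [h2, add_zero] at h
        rw [h3]
        exact h
      have hconsJS : ∀ j ∉ JI, ∑ i, y' i * R i j ≤ ∑ k ∈ KIᶜ, ζ k * A k j := by
        intro j hj
        have h := hcons j
        rw [← Finset.sum_add_sum_compl KI (fun k => q k * A k j)] at h
        have h2 : ∑ k ∈ KI, q k * A k j = 0 := Finset.sum_eq_zero fun k hk => by
          rw [hND2 k j (Or.inl ⟨hk, hj⟩), mul_zero]
        have h3 : ∑ k ∈ KIᶜ, ζ k * A k j = ∑ k ∈ KIᶜ, q k * A k j :=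
          Finset.sum_congr rfl fun k hk => by rw [hζKIc k (Finset.mem_compl.mp hk)]
        rw [h2, zero_add] at h
        rw [h3]
        exact h
      rcases eq_or_lt_of_le hσ0 with hσe | hσp
      · -- σ = 0 : an unbounded improving direction for the dual
        have hq0 : ∀ k ∈ KIᶜ, q k = 0 := by
          intro k hk
          exact (Finset.sum_eq_zero_iff_of_nonneg
            (fun k hk => hqpos k (Finset.mem_compl.mp hk))).mp hσe.symm k hk
        have hd : 0 < ∑ k ∈ KI, ζ k := by
          rw [hζKI]
          have : ρ' * σ = ρ' * 0 := by rw [← hσe]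
          nlinarith [hobj]
        have hfeas' : Dfeas R A JI KI (fun i => ystar i + y' i) (fun k => zstar k + ζ k) := by
          refine ⟨?_, ?_, ?_, ?_⟩
          · intro j hj
            have e1 : ∑ i, (ystar i + y' i) * R i j
                = ∑ i, ystar i * R i j + ∑ i, y' i * R i j := by
              rw [← Finset.sum_add_distrib]
              exact Finset.sum_congr rfl fun i _ => by ring
            have e2 : ∑ k ∈ KI, (zstar k + ζ k) * A k j
                = ∑ k ∈ KI, zstar k * A k j + ∑ k ∈ KI, ζ k * A k j := by
              rw [← Finset.sum_add_distrib]
              exact Finset.sum_congr rfl fun k _ => by ring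
            rw [e1, e2]
            linarith [hDf1 j hj, hconsJI j hj]
          · intro j hj
            have e1 : ∑ i, (ystar i + y' i) * R i j
                = ∑ i, ystar i * R i j + ∑ i, y' i * R i j := by
              rw [← Finset.sum_add_distrib]
              exact Finset.sum_congr rfl fun i _ => by ring
            have e2 : ∑ k ∈ KIᶜ, (zstar k + ζ k) * A k j
                = ∑ k ∈ KIᶜ, zstar k * A k j + ∑ k ∈ KIᶜ, ζ k * A k j := by
              rw [← Finset.sum_add_distrib]
              exact Finset.sum_congr rfl fun k _ => by ring
            rw [e1, e2]
            linarith [hDf2 j hj, hconsJS j hj]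
          · rw [Finset.sum_add_distrib]
            have e0 : ∑ k ∈ KIᶜ, ζ k = 0 := Finset.sum_eq_zero fun k hk => by
              rw [hζKIc k (Finset.mem_compl.mp hk), hq0 k hk]
            rw [hDf3, e0, add_zero]
          · intro k hk
            have e0 : ζ k = 0 := by rw [hζKIc k hk, hq0 k (Finset.mem_compl.mpr hk)]
            show 0 ≤ zstar k + ζ k
            rw [e0, add_zero]
            exact hDf4 k hk
        have hle := hDmax _ _ hfeas'
        rw [Finset.sum_add_distrib] at hle
        rw [← hc] at hle
        linarith
      · -- σ > 0 : a strictly better dual solution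
        have hσinv : 0 ≤ σ⁻¹ := inv_nonneg.mpr hσ0
        have hfeas' : Dfeas R A JI KI (fun i => σ⁻¹ * y' i) (fun k => σ⁻¹ * ζ k) := by
          refine ⟨?_, ?_, ?_, ?_⟩
          · intro j hj
            have e1 : ∑ i, (σ⁻¹ * y' i) * R i j = σ⁻¹ * ∑ i, y' i * R i j := by
              rw [Finset.mul_sum]
              exact Finset.sum_congr rfl fun i _ => by ring
            have e2 : ∑ k ∈ KI, (σ⁻¹ * ζ k) * A k j = σ⁻¹ * ∑ k ∈ KI, ζ k * A k j := by
              rw [Finset.mul_sum]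
              exact Finset.sum_congr rfl fun k _ => by ring
            rw [e1, e2, ← mul_neg]
            exact mul_le_mul_of_nonneg_left (hconsJI j hj) hσinv
          · intro j hj
            have e1 : ∑ i, (σ⁻¹ * y' i) * R i j = σ⁻¹ * ∑ i, y' i * R i j := by
              rw [Finset.mul_sum]
              exact Finset.sum_congr rfl fun i _ => by ring
            have e2 : ∑ k ∈ KIᶜ, (σ⁻¹ * ζ k) * A k j = σ⁻¹ * ∑ k ∈ KIᶜ, ζ k * A k j := by
              rw [Finset.mul_sum]
              exact Finset.sum_congr rfl fun k _ => by ring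
            rw [e1, e2]
            exact mul_le_mul_of_nonneg_left (hconsJS j hj) hσinv
          · rw [← Finset.mul_sum]
            have e0 : ∑ k ∈ KIᶜ, ζ k = σ := by
              rw [hσdef]
              exact Finset.sum_congr rfl fun k hk => hζKIc k (Finset.mem_compl.mp hk)
            rw [e0]
            exact inv_mul_cancel₀ (ne_of_gt hσp)
          · intro k hk
            refine mul_nonneg hσinv ?_
            rw [hζKIc k hk]
            exact hqpos k hk
        have hle := hDmax _ _ hfeas'
        have hgt : ρ' * σ < ∑ k ∈ KI, ζ k := by
          rw [hζKI]
          linarith [hobj]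
        have e3 : ∑ k ∈ KI, σ⁻¹ * ζ k = σ⁻¹ * ∑ k ∈ KI, ζ k := (Finset.mul_sum _ _ _).symm
        have hfin : c < ∑ k ∈ KI, σ⁻¹ * ζ k := by
          rw [e3]
          calc c < ρ' := hρc
            _ = σ⁻¹ * (ρ' * σ) := by field_simp
            _ ≤ σ⁻¹ * ∑ k ∈ KI, ζ k := mul_le_mul_of_nonneg_left hgt.le hσinv
        linarith
  constructor
  · exact ⟨x, hxA, hx0⟩
  · rintro v ⟨a, haA, rfl⟩
    obtain ⟨hapos, hale, haeq⟩ := haA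
    simp only
    have hswap : ∑ i, ∑ j, ystar i * R i j * a j = ∑ j, (∑ i, ystar i * R i j) * a j := by
      rw [Finset.sum_comm]
      exact Finset.sum_congr rfl fun j _ => by rw [Finset.sum_mul]
    rw [hswap]
    have hbound : ∀ j, (∑ i, ystar i * R i j) * a j ≤
        (if j ∈ JI then -∑ k ∈ KI, zstar k * A k j else ∑ k ∈ KIᶜ, zstar k * A k j) * a j := by
      intro j
      by_cases hj : j ∈ JI
      · exact mul_le_mul_of_nonneg_right (by simpa [hj] using hDf1 j hj) (hapos j)
      · exact mul_le_mul_of_nonneg_right (by simpa [hj] using hDf2 j hj) (hapos j)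
    have hKIval : ∑ k ∈ KI, zstar k * ∑ j ∈ JI, A k j * a j = c := by
      refine Finset.sum_congr rfl fun k hk => ?_
      have h1 : ∑ j ∈ JI, A k j * a j = ∑ j, A k j * a j :=
        Finset.sum_subset (Finset.subset_univ JI)
          (fun j _ hj => by rw [hND2 k j (Or.inl ⟨hk, hj⟩), zero_mul])
      rw [h1, haeq k hk, mul_one]
    have hKSval : ∑ k ∈ KIᶜ, zstar k * ∑ j ∈ JIᶜ, A k j * a j ≤ ∑ k ∈ KIᶜ, zstar k := by
      refine Finset.sum_le_sum fun k hk => ?_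
      have hk' : k ∉ KI := Finset.mem_compl.mp hk
      have h1 : ∑ j ∈ JIᶜ, A k j * a j = ∑ j, A k j * a j :=
        Finset.sum_subset (Finset.subset_univ JIᶜ)
          (fun j _ hj => by
            rw [hND2 k j (Or.inr ⟨hk', not_not.mp (fun h => hj (Finset.mem_compl.mpr h))⟩),
              zero_mul])
      calc zstar k * ∑ j ∈ JIᶜ, A k j * a j ≤ zstar k * 1 := by
            rw [h1]; exact mul_le_mul_of_nonneg_left (hale k) (hDf4 k hk')
        _ = zstar k := mul_one _
    calc ∑ j, (∑ i, ystar i * R i j) * a j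
        ≤ ∑ j, (if j ∈ JI then -∑ k ∈ KI, zstar k * A k j else ∑ k ∈ KIᶜ, zstar k * A k j) * a j :=
          Finset.sum_le_sum fun j _ => hbound j
      _ = ∑ j ∈ JI, (-∑ k ∈ KI, zstar k * A k j) * a j
            + ∑ j ∈ JIᶜ, (∑ k ∈ KIᶜ, zstar k * A k j) * a j := by
          rw [← Finset.sum_add_sum_compl JI]
          congr 1
          · exact Finset.sum_congr rfl fun j hj => by rw [if_pos hj]
          · exact Finset.sum_congr rfl fun j hj => by rw [if_neg (Finset.mem_compl.mp hj)]
      _ = -(∑ k ∈ KI, zstar k * ∑ j ∈ JI, A k j * a j)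
            + ∑ k ∈ KIᶜ, zstar k * ∑ j ∈ JIᶜ, A k j * a j := by
          rw [← FarkasDev.swap_sum_mul JI KI, ← FarkasDev.swap_sum_mul JIᶜ KIᶜ]
          congr 1
          rw [← Finset.sum_neg_distrib]
          exact Finset.sum_congr rfl fun j _ => by ring
      _ ≤ 0 := by
          rw [hKIval]
          have := hDf3
          linarith [hKSval, hDf3]
end

section
/- Let ℐ be a finite index set of size I ≥ 1, c ∈ ℝ^ℐ with c_i > 0 for all i, and y* ∈ ℝ^ℐ with y* ≥ 0, y* ≠ 0. Let ι be an index with y*_ι > 0 minimizing c_i/y*_i over {i : y*_i > 0}. Given ε > 0, define α ∈ ℝ^ℐ by α_ι = c_ι y*_ι ε/(I · max_i (c_i y*_i)) and α_i = 1 for i ≠ ι, and let ζ^α_i = (y*_i/α_i)/(Σ_{i'} (y*_{i'})²/α_{i'}). Then c_i ζ^α_i ≤ c_ι ε/(y*_ι I) for every i ≠ ι, c_ι ζ^α_ι ≤ c_ι/y*_ι, and consequently Σ_i c_i ζ^α_i ≤ (c_ι/y*_ι)(1 + ε). -/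
open Finset in
/-- The computation in the proof of Theorem 7: for the particular parameter `α`
used there, the linear cost of the lifted state is within a factor `1 + ε` of
the lower bound `c_ι / y*_ι`. -/
theorem eps_optimal_alpha_cost {I : Type*} [Fintype I] [Nonempty I]
    (c ystar : I → ℝ) (hc : ∀ i, 0 < c i) (hynn : ∀ i, 0 ≤ ystar i)
    (hy0 : ystar ≠ 0)
    (ι : I) (hι : 0 < ystar ι)
    (hιmin : ∀ i, 0 < ystar i → c ι / ystar ι ≤ c i / ystar i)
    (ε : ℝ) (hε : 0 < ε)
    (α : I → ℝ)
    (hαι : α ι = c ι * ystar ι * ε /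
      ((Fintype.card I : ℝ) * univ.sup' univ_nonempty fun i => c i * ystar i))
    (hαother : ∀ i, i ≠ ι → α i = 1) :
    (∀ i, i ≠ ι → c i * zeta α ystar i ≤ c ι * ε / (ystar ι * (Fintype.card I : ℝ))) ∧
    c ι * zeta α ystar ι ≤ c ι / ystar ι ∧
    ∑ i, c i * zeta α ystar i ≤ c ι / ystar ι * (1 + ε) := by
  classical
  set M := univ.sup' univ_nonempty fun i => c i * ystar i with hMdef
  have hMle : ∀ i, c i * ystar i ≤ M := by
    intro i; rw [hMdef]; exact le_sup' (fun j => c j * ystar j) (mem_univ i)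
  have hMpos : 0 < M := lt_of_lt_of_le (mul_pos (hc ι) hι) (hMle ι)
  have hcard : (0:ℝ) < (Fintype.card I : ℝ) := by
    exact_mod_cast Fintype.card_pos
  have hαιpos : 0 < α ι := by
    rw [hαι]
    exact div_pos (mul_pos (mul_pos (hc ι) hι) hε) (mul_pos hcard hMpos)
  have hαpos : ∀ i, 0 < α i := by
    intro i
    by_cases h : i = ι
    · subst h; exact hαιpos
    · rw [hαother i h]; norm_num
  have hterm : ∀ i, 0 ≤ ystar i ^ 2 / α i := fun i => by
    have := hαpos i; positivity
  set S := ∑ i', ystar i' ^ 2 / α i' with hSdef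
  have hSlb : ystar ι ^ 2 / α ι ≤ S :=
    Finset.single_le_sum (fun i _ => hterm i) (mem_univ ι)
  have hSpos : 0 < S := lt_of_lt_of_le (by positivity) hSlb
  have hkey : ystar ι ^ 2 / α ι = ystar ι * (Fintype.card I : ℝ) * M / (c ι * ε) := by
    rw [hαι]
    field_simp [hι.ne', (hc ι).ne', hε.ne', hcard.ne', hMpos.ne']
  have hSlb' : ystar ι * (Fintype.card I : ℝ) * M / (c ι * ε) ≤ S := hkey ▸ hSlb
  have hzeta : ∀ i, zeta α ystar i = (ystar i / α i) / S := fun i => rfl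
  have part1 : ∀ i, i ≠ ι → c i * zeta α ystar i ≤ c ι * ε / (ystar ι * (Fintype.card I : ℝ)) := by
    intro i hi
    rw [hzeta, hαother i hi, div_one]
    have hciy : c i * ystar i ≤ M := hMle i
    have h1 : c ι * ε * (ystar ι * (Fintype.card I : ℝ) * M / (c ι * ε)) ≤ c ι * ε * S :=
      mul_le_mul_of_nonneg_left hSlb' (mul_pos (hc ι) hε).le
    have h2 : c ι * ε * (ystar ι * (Fintype.card I : ℝ) * M / (c ι * ε))
        = ystar ι * (Fintype.card I : ℝ) * M := by
      rw [mul_comm, div_mul_cancel₀ _ (mul_pos (hc ι) hε).ne']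
    rw [h2] at h1
    rw [mul_div_assoc'] at *
    rw [div_le_div_iff₀ hSpos (by positivity)]
    nlinarith [mul_le_mul_of_nonneg_right hciy (by positivity : (0:ℝ) ≤ ystar ι * (Fintype.card I : ℝ))]
  have part2 : c ι * zeta α ystar ι ≤ c ι / ystar ι := by
    rw [hzeta]
    have h1 : (ystar ι / α ι) / S ≤ (ystar ι / α ι) / (ystar ι ^ 2 / α ι) :=
      div_le_div_of_nonneg_left (by positivity) (by positivity) hSlb
    have h2 : (ystar ι / α ι) / (ystar ι ^ 2 / α ι) = 1 / ystar ι := by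
      field_simp
    rw [h2] at h1
    calc c ι * ((ystar ι / α ι) / S) ≤ c ι * (1 / ystar ι) :=
          mul_le_mul_of_nonneg_left h1 (hc ι).le
      _ = c ι / ystar ι := by ring
  refine ⟨part1, part2, ?_⟩
  classical
  have hsum : ∑ i ∈ univ.erase ι, c i * zeta α ystar i
      ≤ (Fintype.card I : ℝ) * (c ι * ε / (ystar ι * (Fintype.card I : ℝ))) := by
    have h1 : ∑ i ∈ univ.erase ι, c i * zeta α ystar i
        ≤ (univ.erase ι).card • (c ι * ε / (ystar ι * (Fintype.card I : ℝ))) :=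
      Finset.sum_le_card_nsmul _ _ _ (fun i hi => part1 i (Finset.ne_of_mem_erase hi))
    refine h1.trans ?_
    rw [nsmul_eq_mul]
    apply mul_le_mul_of_nonneg_right _ (div_nonneg (mul_pos (hc ι) hε).le (mul_pos hι hcard).le)
    exact_mod_cast Nat.cast_le.mpr (Finset.card_le_card (Finset.erase_subset _ _)) |>.trans
      (le_of_eq (by simp))
  have hsplit : ∑ i, c i * zeta α ystar i
      = c ι * zeta α ystar ι + ∑ i ∈ univ.erase ι, c i * zeta α ystar i :=
    (Finset.add_sum_erase univ _ (mem_univ ι)).symm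
  rw [hsplit]
  have hfin : (Fintype.card I : ℝ) * (c ι * ε / (ystar ι * (Fintype.card I : ℝ)))
      = c ι * ε / ystar ι := by
    field_simp
  calc c ι * zeta α ystar ι + ∑ i ∈ univ.erase ι, c i * zeta α ystar i
      ≤ c ι / ystar ι + c ι * ε / ystar ι := by
        rw [← hfin]; exact add_le_add part2 hsum
    _ = c ι / ystar ι * (1 + ε) := by field_simp
end

section
/- Consider a sequence of network data (R^r, A), r ∈ ℕ, and limit data (R, A), sharing the same index sets and consumption matrix A, with R^r → R entrywise. Assume: the static planning problem for (R, A) has a unique optimal solution (ρ*, x*) with ρ* = 1; for each r the dual problem for (R^r, A) has a unique optimal solution (y^r, z^r), which is nonnegative; and the dual problem for (R, A) has a unique optimal solution (y*, z*), which is nonnegative. Then the sequence (y^r)_{r∈ℕ} is bounded in ℝ^ℐ. -/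
open Finset

open Filter in
/-- Part of the proof of Lemma 1: the dual optimal vectors `y^r` form a bounded
sequence. -/
theorem dual_opt_bounded {I J K : Type*} [Fintype I] [Fintype J] [Fintype K] [DecidableEq J] [DecidableEq K]
    (R : I → J → ℝ) (A : K → J → ℝ) (JI : Finset J) (KI : Finset K)
    (hND : NetData A JI KI)
    (Rseq : ℕ → I → J → ℝ)
    (hconv : ∀ i j, Tendsto (fun r => Rseq r i j) atTop (nhds (R i j)))
    (xstar : J → ℝ) (hSPP : SPPuniqueOpt R A KI 1 xstar)
    (yr : ℕ → I → ℝ) (zr : ℕ → K → ℝ)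
    (hDr : ∀ r, DuniqueOpt (Rseq r) A JI KI (yr r) (zr r))
    (hyrnn : ∀ r i, 0 ≤ yr r i) (hzrnn : ∀ r k, 0 ≤ zr r k)
    (ystar : I → ℝ) (zstar : K → ℝ) (hD : DuniqueOpt R A JI KI ystar zstar)
    (hynn : ∀ i, 0 ≤ ystar i) (hznn : ∀ k, 0 ≤ zstar k) :
    ∃ C : ℝ, ∀ r i, |yr r i| ≤ C := by
  by_contra hC
  push_neg at hC
  set s : ℕ → ℝ := fun r => ∑ i, yr r i with hs
  have hsnn : ∀ r, 0 ≤ s r := fun r => Finset.sum_nonneg fun i _ => hyrnn r i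
  have hyle : ∀ r i, yr r i ≤ s r := fun r i =>
    Finset.single_le_sum (fun i _ => hyrnn r i) (Finset.mem_univ i)
  have hsub : ∀ C : ℝ, ∃ r, C < s r := by
    intro C
    obtain ⟨r, i, hri⟩ := hC C
    refine ⟨r, lt_of_lt_of_le hri ?_⟩
    rw [abs_of_nonneg (hyrnn r i)]
    exact hyle r i
  choose φ0 hφ0 using fun n : ℕ => hsub n
  have hspos : ∀ n : ℕ, 0 < s (φ0 n) := fun n =>
    lt_of_le_of_lt (Nat.cast_nonneg n) (hφ0 n)
  have hφ0top : Tendsto φ0 atTop atTop := by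
    rw [tendsto_atTop]
    intro N
    set M : ℝ := ∑ m ∈ Finset.range N, s m with hM
    filter_upwards [eventually_ge_atTop ⌈M⌉₊] with n hn
    by_contra hlt
    push_neg at hlt
    have h1 : s (φ0 n) ≤ M :=
      Finset.single_le_sum (fun m _ => hsnn m) (Finset.mem_range.mpr hlt)
    have h2 : M ≤ (n : ℝ) := le_trans (Nat.le_ceil M) (Nat.cast_le.mpr hn)
    exact absurd (hφ0 n) (not_lt.mpr (h1.trans h2))
  -- normalized vectors
  set u : ℕ → I → ℝ := fun n i => yr (φ0 n) i / s (φ0 n) with hu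
  have huK : ∀ n, u n ∈ Set.pi Set.univ (fun _ : I => Set.Icc (0:ℝ) 1) := by
    intro n i _
    refine ⟨div_nonneg (hyrnn _ i) (hspos n).le, ?_⟩
    rw [div_le_one (hspos n)]
    exact hyle _ i
  obtain ⟨ul, hulK, ψ, hψmono, hψtend⟩ :=
    (isCompact_univ_pi fun _ : I => isCompact_Icc).tendsto_subseq huK
  have hul01 : ∀ i, ul i ∈ Set.Icc (0:ℝ) 1 := fun i => hulK i (Set.mem_univ i)
  have hucoord : ∀ i, Tendsto (fun n => u (ψ n) i) atTop (nhds (ul i)) :=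
    fun i => ((continuous_apply i).tendsto ul).comp hψtend
  set r : ℕ → ℕ := fun n => φ0 (ψ n) with hr
  have hrtop : Tendsto r atTop atTop := hφ0top.comp hψmono.tendsto_atTop
  have hstop : Tendsto (fun n => s (r n)) atTop atTop := by
    apply tendsto_atTop_mono (fun n => (hφ0 (ψ n)).le.trans' ?_) tendsto_natCast_atTop_atTop
    exact_mod_cast hψmono.le_apply
  have hsinv : Tendsto (fun n => 1 / s (r n)) atTop (nhds 0) := by
    simpa [Pi.inv_def] using hstop.inv_tendsto_atTop
  -- the rescaled constraints
  have hA01 : ∀ k j, 0 ≤ A k j ∧ A k j ≤ 1 := by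
    intro k j
    rcases hND.1 k j with h | h <;> simp [h]
  have hbound : ∀ n j, ∑ i, u (ψ n) i * Rseq (r n) i j ≤ 1 / s (r n) := by
    intro n j
    have hfeas := (hDr (r n)).1.1
    have hrw : ∑ i, u (ψ n) i * Rseq (r n) i j
        = (∑ i, yr (r n) i * Rseq (r n) i j) / s (r n) := by
      rw [Finset.sum_div]
      exact Finset.sum_congr rfl fun i _ => by rw [div_mul_eq_mul_div]
    rw [hrw, div_le_div_iff₀ (hspos (ψ n)) (hspos (ψ n))]
    have hspos' : (0:ℝ) < s (r n) := hspos (ψ n)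
    rw [one_mul]
    by_cases hj : j ∈ JI
    · have h1 := hfeas.1 j hj
      have h2 : - ∑ k ∈ KI, zr (r n) k * A k j ≤ 0 := by
        rw [neg_nonpos]
        exact Finset.sum_nonneg fun k _ => mul_nonneg (hzrnn _ k) (hA01 k j).1
      nlinarith [h1.trans h2]
    · have h1 := hfeas.2.1 j hj
      have h2 : ∑ k ∈ KIᶜ, zr (r n) k * A k j ≤ 1 := by
        rw [← hfeas.2.2.1]
        refine Finset.sum_le_sum fun k hk => ?_
        calc zr (r n) k * A k j ≤ zr (r n) k * 1 :=
              mul_le_mul_of_nonneg_left (hA01 k j).2 (hzrnn _ k)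
          _ = zr (r n) k := mul_one _
      nlinarith [h1.trans h2]
  -- limit inequalities
  have hRlim : ∀ i j, Tendsto (fun n => Rseq (r n) i j) atTop (nhds (R i j)) :=
    fun i j => (hconv i j).comp hrtop
  have hLlim : ∀ j, Tendsto (fun n => ∑ i, u (ψ n) i * Rseq (r n) i j) atTop
      (nhds (∑ i, ul i * R i j)) := by
    intro j
    exact tendsto_finset_sum _ fun i _ => (hucoord i).mul (hRlim i j)
  have hL : ∀ j, ∑ i, ul i * R i j ≤ 0 :=
    fun j => le_of_tendsto_of_tendsto' (hLlim j) hsinv (fun n => hbound n j)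
  have hsum1 : ∑ i, ul i = 1 := by
    have h1 : Tendsto (fun n => ∑ i, u (ψ n) i) atTop (nhds (∑ i, ul i)) :=
      tendsto_finset_sum _ fun i _ => hucoord i
    have h2 : ∀ n, ∑ i, u (ψ n) i = 1 := by
      intro n
      simp only [hu]
      rw [← Finset.sum_div, div_self (hspos (ψ n)).ne']
    rw [funext h2] at h1
    exact (tendsto_nhds_unique tendsto_const_nhds h1).symm
  -- y* + ul is also dual optimal
  have hDfeas := hD.1.1
  have hfeas' : Dfeas R A JI KI (fun i => ystar i + ul i) zstar := by
    have key : ∀ j, ∑ i, (ystar i + ul i) * R i j ≤ ∑ i, ystar i * R i j := by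
      intro j
      have : ∑ i, (ystar i + ul i) * R i j
          = (∑ i, ystar i * R i j) + ∑ i, ul i * R i j := by
        rw [← Finset.sum_add_distrib]
        exact Finset.sum_congr rfl fun i _ => by ring
      rw [this]
      linarith [hL j]
    exact ⟨fun j hj => (key j).trans (hDfeas.1 j hj),
      fun j hj => (key j).trans (hDfeas.2.1 j hj), hDfeas.2.2.1, hDfeas.2.2.2⟩
  have hopt' : Dopt R A JI KI (fun i => ystar i + ul i) zstar :=
    ⟨hfeas', fun y' z' h => hD.1.2 y' z' h⟩
  have heq := (hD.2 _ _ hopt').1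
  have : ∀ i, ul i = 0 := by
    intro i
    have := congrFun heq i
    linarith [this]
  simp [this] at hsum1
end
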